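/- arXiv:1609.05231 — 5 statements merged into one kernel-verified Lean document; each statement's English description precedes it below -/
import Mathlib

section
/- Let 0 < λ ≤ Λ. There exists a constant c₀ > 0 depending only on λ and Λ with the following property: for all measurable a, b : (0,1) → ℝ with λ ≤ a, b ≤ Λ a.e., writing A := 1/a, B := 1/b, γ_A := (∫₀¹ t·A)/(∫₀¹ A), γ_B := (∫₀¹ t·B)/(∫₀¹ B), and E'(x) := B(x)(x - γ_B) - A(x)(x - γ_A), if η := γ_A - γ_B ≥ 0, then η ≤ c₀·(∫₀¹ E'(x)² dx)^{1/3}. -/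
open MeasureTheory Real Set

/-- The constant `γ_A = (∫₀¹ t A(t) dt) / (∫₀¹ A(t) dt)`. -/
noncomputable def gammaOf (A : ℝ → ℝ) : ℝ :=
  (∫ t in (0:ℝ)..1, t * A t) / (∫ t in (0:ℝ)..1, A t)

lemma aux_bounds (lam Lam : ℝ) (hlam : 0 < lam) (hlL : lam ≤ Lam)
    (a : ℝ → ℝ) (ha : Measurable a)
    (hab : ∀ᵐ x ∂(volume.restrict (Ioc (0:ℝ) 1)), lam ≤ a x ∧ a x ≤ Lam) :
    0 ≤ gammaOf (fun t => 1 / a t) ∧ gammaOf (fun t => 1 / a t) ≤ 1 := by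
  have hLam : 0 < Lam := lt_of_lt_of_le hlam hlL
  have hmeas : Measurable fun t => 1 / a t := measurable_const.div ha
  have hbd : ∀ᵐ x ∂(volume.restrict (Ioc (0:ℝ) 1)),
      1 / Lam ≤ 1 / a x ∧ 1 / a x ≤ 1 / lam := by
    filter_upwards [hab] with x hx
    have hx0 : 0 < a x := lt_of_lt_of_le hlam hx.1
    exact ⟨one_div_le_one_div_of_le hx0 hx.2, one_div_le_one_div_of_le hlam hx.1⟩
  have hmem : ∀ᵐ x ∂(volume.restrict (Ioc (0:ℝ) 1)), x ∈ Ioc (0:ℝ) 1 :=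
    ae_restrict_mem measurableSet_Ioc
  have hintA : IntegrableOn (fun t => 1 / a t) (Ioc (0:ℝ) 1) volume := by
    refine Integrable.mono' (integrable_const (1 / lam)) hmeas.aestronglyMeasurable ?_
    filter_upwards [hbd] with x hx
    rw [Real.norm_eq_abs, abs_le]
    constructor
    · have : (0:ℝ) ≤ 1 / Lam := by positivity
      have : (0:ℝ) ≤ 1 / lam := by positivity
      linarith [hx.1, hx.2]
    · exact hx.2
  have hintTA : IntegrableOn (fun t => t * (1 / a t)) (Ioc (0:ℝ) 1) volume := by
    refine Integrable.mono' (integrable_const (1 / lam))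
      ((measurable_id.mul hmeas).aestronglyMeasurable) ?_
    filter_upwards [hbd, hmem] with x hx hxm
    rw [Real.norm_eq_abs, abs_le]
    have h1 : (0:ℝ) ≤ 1 / Lam := by positivity
    constructor
    · nlinarith [hxm.1.le, hxm.2, hx.1, hx.2]
    · nlinarith [hxm.1.le, hxm.2, hx.1, hx.2]
  have hden : 1 / Lam ≤ ∫ t in Ioc (0:ℝ) 1, 1 / a t := by
    have := integral_mono_ae (μ := volume.restrict (Ioc (0:ℝ) 1))
      (integrable_const (1 / Lam)) hintA (by filter_upwards [hbd] with x hx using hx.1)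
    simpa [Real.volume_Ioc] using this
  have hdenpos : 0 < ∫ t in Ioc (0:ℝ) 1, 1 / a t :=
    lt_of_lt_of_le (by positivity) hden
  have hnum0 : 0 ≤ ∫ t in Ioc (0:ℝ) 1, t * (1 / a t) := by
    refine integral_nonneg_of_ae ?_
    filter_upwards [hbd, hmem] with x hx hxm
    have h1 : (0:ℝ) ≤ 1 / Lam := by positivity
    exact mul_nonneg hxm.1.le (h1.trans hx.1)
  have hnumle : (∫ t in Ioc (0:ℝ) 1, t * (1 / a t)) ≤ ∫ t in Ioc (0:ℝ) 1, 1 / a t := by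
    refine integral_mono_ae hintTA hintA ?_
    filter_upwards [hbd, hmem] with x hx hxm
    have h1 : (0:ℝ) ≤ 1 / Lam := by positivity
    nlinarith [hxm.1.le, hxm.2, hx.1]
  have hgam : gammaOf (fun t => 1 / a t)
      = (∫ t in Ioc (0:ℝ) 1, t * (1 / a t)) / ∫ t in Ioc (0:ℝ) 1, 1 / a t := by
    rw [gammaOf, intervalIntegral.integral_of_le zero_le_one,
      intervalIntegral.integral_of_le zero_le_one]
  rw [hgam]
  exact ⟨div_nonneg hnum0 hdenpos.le, (div_le_one hdenpos).2 hnumle⟩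

/-- Lemma 6.1 of the paper: there is a constant `c₀ = c₀(λ,Λ) > 0` such that for all
diffusion coefficients `a, b` with `λ ≤ a, b ≤ Λ` a.e. on `(0,1)`, writing `A = 1/a`,
`B = 1/b`, `γ_A, γ_B` the corresponding constants and
`E'(x) = B(x)(x-γ_B) - A(x)(x-γ_A) = u_a'(x) - u_b'(x)`, if `η := γ_A - γ_B ≥ 0` then
`η ≤ c₀ ‖E'‖_{L²(0,1)}^{2/3} = c₀ (∫₀¹ E'²)^{1/3}`. -/
theorem stmt2 (lam Lam : ℝ) (hlam : 0 < lam) (hlL : lam ≤ Lam) :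
    ∃ c₀ : ℝ, 0 < c₀ ∧
      ∀ a b : ℝ → ℝ, Measurable a → Measurable b →
        (∀ᵐ x ∂(volume.restrict (Ioo (0:ℝ) 1)), lam ≤ a x ∧ a x ≤ Lam) →
        (∀ᵐ x ∂(volume.restrict (Ioo (0:ℝ) 1)), lam ≤ b x ∧ b x ≤ Lam) →
        0 ≤ gammaOf (fun t => 1 / a t) - gammaOf (fun t => 1 / b t) →
        gammaOf (fun t => 1 / a t) - gammaOf (fun t => 1 / b t) ≤
          c₀ * (∫ x in (0:ℝ)..1,
              ((1 / b x) * (x - gammaOf (fun t => 1 / b t))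
                - (1 / a x) * (x - gammaOf (fun t => 1 / a t))) ^ 2) ^ ((1:ℝ)/3) := by
  have hLam : 0 < Lam := lt_of_lt_of_le hlam hlL
  refine ⟨(Lam ^ 2) ^ ((1:ℝ)/3), by positivity, ?_⟩
  intro a b ha hb hab' hbb' hη
  have hrestr : volume.restrict (Ioo (0:ℝ) 1) = volume.restrict (Ioc (0:ℝ) 1) :=
    Measure.restrict_congr_set Ioo_ae_eq_Ioc
  rw [hrestr] at hab' hbb'
  set γA := gammaOf (fun t => 1 / a t) with hγA
  set γB := gammaOf (fun t => 1 / b t) with hγB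
  set η := γA - γB with hηdef
  set f : ℝ → ℝ := fun x => (1 / b x) * (x - γB) - (1 / a x) * (x - γA) with hf
  have hA01 := aux_bounds lam Lam hlam hlL a ha hab'
  have hB01 := aux_bounds lam Lam hlam hlL b hb hbb'
  have hbdA : ∀ᵐ x ∂(volume.restrict (Ioc (0:ℝ) 1)),
      1 / Lam ≤ 1 / a x ∧ 1 / a x ≤ 1 / lam := by
    filter_upwards [hab'] with x hx
    have hx0 : 0 < a x := lt_of_lt_of_le hlam hx.1
    exact ⟨one_div_le_one_div_of_le hx0 hx.2, one_div_le_one_div_of_le hlam hx.1⟩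
  have hbdB : ∀ᵐ x ∂(volume.restrict (Ioc (0:ℝ) 1)),
      1 / Lam ≤ 1 / b x ∧ 1 / b x ≤ 1 / lam := by
    filter_upwards [hbb'] with x hx
    have hx0 : 0 < b x := lt_of_lt_of_le hlam hx.1
    exact ⟨one_div_le_one_div_of_le hx0 hx.2, one_div_le_one_div_of_le hlam hx.1⟩
  have hmemIoc : ∀ᵐ x ∂(volume.restrict (Ioc (0:ℝ) 1)), x ∈ Ioc (0:ℝ) 1 :=
    ae_restrict_mem measurableSet_Ioc
  have hmeasf : Measurable f := by
    exact ((measurable_const.div hb).mul (measurable_id.sub measurable_const)).sub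
      ((measurable_const.div ha).mul (measurable_id.sub measurable_const))
  -- integrability of f^2 on Ioc 0 1
  have hintf2 : IntegrableOn (fun x => f x ^ 2) (Ioc (0:ℝ) 1) volume := by
    refine Integrable.mono' (integrable_const ((2 / lam) ^ 2))
      ((hmeasf.pow_const 2).aestronglyMeasurable) ?_
    filter_upwards [hbdA, hbdB, hmemIoc] with x hxA hxB hxm
    have h1 : (0:ℝ) ≤ 1 / Lam := by positivity
    have habs : |f x| ≤ 2 / lam := by
      have hB1 : |1 / b x| ≤ 1 / lam := abs_le.2 ⟨by linarith [hxB.1], hxB.2⟩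
      have hA1 : |1 / a x| ≤ 1 / lam := abs_le.2 ⟨by linarith [hxA.1], hxA.2⟩
      have hxB2 : |x - γB| ≤ 1 := abs_le.2 ⟨by linarith [hxm.1.le, hB01.2], by linarith [hxm.2, hB01.1]⟩
      have hxA2 : |x - γA| ≤ 1 := abs_le.2 ⟨by linarith [hxm.1.le, hA01.2], by linarith [hxm.2, hA01.1]⟩
      calc |f x| ≤ |(1 / b x) * (x - γB)| + |(1 / a x) * (x - γA)| := abs_sub _ _
        _ = |1 / b x| * |x - γB| + |1 / a x| * |x - γA| := by rw [abs_mul, abs_mul]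
        _ ≤ (1 / lam) * 1 + (1 / lam) * 1 :=
            add_le_add (mul_le_mul hB1 hxB2 (abs_nonneg _) (by positivity))
              (mul_le_mul hA1 hxA2 (abs_nonneg _) (by positivity))
        _ = 2 / lam := by ring
    rw [Real.norm_eq_abs, abs_of_nonneg (sq_nonneg _), ← sq_abs]
    exact pow_le_pow_left₀ (abs_nonneg _) habs 2
  have hη0 : 0 ≤ η := hη
  -- subset
  have hsub : Ioo γB γA ⊆ Ioc (0:ℝ) 1 := fun x hx =>
    ⟨lt_of_le_of_lt hB01.1 hx.1, le_trans hx.2.le hA01.2⟩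
  -- pointwise lower bound on Ioo γB γA
  have hptwise : ∀ᵐ x ∂(volume.restrict (Ioo γB γA)), (η / Lam) ^ 2 ≤ f x ^ 2 := by
    have hA' : ∀ᵐ x ∂(volume.restrict (Ioo γB γA)), 1 / Lam ≤ 1 / a x :=
      ae_restrict_of_ae_restrict_of_subset hsub
        (by filter_upwards [hbdA] with x hx using hx.1)
    have hB' : ∀ᵐ x ∂(volume.restrict (Ioo γB γA)), 1 / Lam ≤ 1 / b x :=
      ae_restrict_of_ae_restrict_of_subset hsub
        (by filter_upwards [hbdB] with x hx using hx.1)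
    filter_upwards [hA', hB', ae_restrict_mem measurableSet_Ioo] with x hxA hxB hxm
    have h1 : (0:ℝ) ≤ 1 / Lam := by positivity
    have hle : η / Lam ≤ f x := by
      have e1 : 0 ≤ x - γB := by linarith [hxm.1]
      have e2 : 0 ≤ γA - x := by linarith [hxm.2]
      have : η / Lam = (1/Lam) * (x - γB) + (1/Lam) * (γA - x) := by
        rw [hηdef]
        field_simp <;> ring
      rw [this, hf]
      have t1 : (1/Lam) * (x - γB) ≤ (1 / b x) * (x - γB) := mul_le_mul_of_nonneg_right hxB e1
      have t2 : (1/Lam) * (γA - x) ≤ (1 / a x) * (γA - x) := mul_le_mul_of_nonneg_right hxA e2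
      nlinarith
    have hC0 : 0 ≤ η / Lam := div_nonneg hη0 hLam.le
    exact pow_le_pow_left₀ hC0 hle 2
  -- integral lower bound on Ioo γB γA
  have hmeasIoo : volume (Ioo γB γA) = ENNReal.ofReal η := by
    rw [Real.volume_Ioo]
  have hlow : (η / Lam) ^ 2 * η ≤ ∫ x in Ioo γB γA, f x ^ 2 := by
    have hintc : IntegrableOn (fun _ : ℝ => (η / Lam) ^ 2) (Ioo γB γA) volume := by
      refine integrableOn_const ?_
      rw [hmeasIoo]
      exact ENNReal.ofReal_ne_top
    have := integral_mono_ae (μ := volume.restrict (Ioo γB γA)) hintc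
      (hintf2.mono_set hsub) hptwise
    calc (η / Lam) ^ 2 * η
        = ∫ _ in Ioo γB γA, (η / Lam) ^ 2 := by
          rw [setIntegral_const, measureReal_def, hmeasIoo, ENNReal.toReal_ofReal hη0, smul_eq_mul, mul_comm]
      _ ≤ ∫ x in Ioo γB γA, f x ^ 2 := this
  have hmono : (∫ x in Ioo γB γA, f x ^ 2) ≤ ∫ x in Ioc (0:ℝ) 1, f x ^ 2 := by
    refine setIntegral_mono_set hintf2 ?_ (HasSubset.Subset.eventuallyLE hsub)
    filter_upwards with x using sq_nonneg _
  set I := ∫ x in (0:ℝ)..1, f x ^ 2 with hI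
  have hIeq : I = ∫ x in Ioc (0:ℝ) 1, f x ^ 2 :=
    intervalIntegral.integral_of_le zero_le_one
  have hI0 : 0 ≤ I := by
    rw [hIeq]; exact integral_nonneg fun x => sq_nonneg _
  have hkey : η ^ 3 ≤ Lam ^ 2 * I := by
    have h3 : (η / Lam) ^ 2 * η ≤ I := by rw [hIeq]; linarith
    have h4 : η ^ 3 = Lam ^ 2 * ((η / Lam) ^ 2 * η) := by field_simp
    rw [h4]
    exact mul_le_mul_of_nonneg_left h3 (by positivity)
  -- conclude via cube roots
  have hrpow := Real.rpow_le_rpow (by positivity) hkey (by norm_num : (0:ℝ) ≤ 1/3)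
  have hleft : (η ^ 3 : ℝ) ^ ((1:ℝ)/3) = η := by
    rw [← Real.rpow_natCast η 3, ← Real.rpow_mul hη0]
    norm_num
  have hright : (Lam ^ 2 * I) ^ ((1:ℝ)/3) = (Lam ^ 2) ^ ((1:ℝ)/3) * I ^ ((1:ℝ)/3) :=
    Real.mul_rpow (sq_nonneg Lam) hI0
  rw [hleft, hright] at hrpow
  exact hrpow
end

section
/- Let 0 < λ ≤ Λ. There exists a constant C > 0 depending only on λ and Λ such that for all measurable a, b : (0,1) → ℝ with λ ≤ a, b ≤ Λ a.e., writing A := 1/a, B := 1/b, γ_A, γ_B as above and E'(x) := B(x)(x - γ_B) - A(x)(x - γ_A), one has for every ρ > 0: ∫₀¹ (A(x) - B(x))² dx ≤ (C/ρ²)·(∫₀¹ E'(x)² dx)^{2/3} + 8 λ^{-2} ρ. -/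
open MeasureTheory Real Set

set_option maxHeartbeats 1000000 in
lemma interval_eq_Ioo (f : ℝ → ℝ) : (∫ x in (0:ℝ)..1, f x) = ∫ x in Ioo (0:ℝ) 1, f x := by
  rw [intervalIntegral.integral_of_le (by norm_num : (0:ℝ) ≤ 1),
    ← Measure.restrict_congr_set MeasureTheory.Ioo_ae_eq_Ioc]

lemma integrable_of_bound {A : ℝ → ℝ} {s : Set ℝ} (hs : MeasurableSet s) (hμ : volume s < ⊤)
    (hA : Measurable A) (c : ℝ)
    (hb : ∀ᵐ x ∂(volume.restrict s), |A x| ≤ c) : IntegrableOn A s := by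
  have : IsFiniteMeasure (volume.restrict s) := by
    constructor
    rw [Measure.restrict_apply_univ]; exact hμ
  exact Integrable.mono' (integrable_const c) hA.aestronglyMeasurable
    (by simpa [Real.norm_eq_abs] using hb)

lemma vol01 : (volume.restrict (Ioo (0:ℝ) 1)) univ = 1 := by
  rw [Measure.restrict_apply_univ, Real.volume_Ioo]; norm_num

lemma gamma_mem {l L : ℝ} {A : ℝ → ℝ} (hl : 0 < l) (hA : Measurable A)
    (hb : ∀ᵐ x ∂(volume.restrict (Ioo (0:ℝ) 1)), l ≤ A x ∧ A x ≤ L) :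
    gammaOf A ∈ Icc (0:ℝ) 1 := by
  have hmem : ∀ᵐ x ∂(volume.restrict (Ioo (0:ℝ) 1)), x ∈ Ioo (0:ℝ) 1 :=
    ae_restrict_mem measurableSet_Ioo
  have hfin : volume (Ioo (0:ℝ) 1) < ⊤ := by rw [Real.volume_Ioo]; norm_num
  have hIA : IntegrableOn A (Ioo (0:ℝ) 1) := by
    refine integrable_of_bound measurableSet_Ioo hfin hA (|l| + |L|) ?_
    filter_upwards [hb] with x hx
    rcases hx with ⟨h1, h2⟩
    rw [abs_le]
    constructor
    · nlinarith [neg_abs_le l, le_abs_self L, abs_nonneg L, abs_nonneg l]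
    · nlinarith [le_abs_self L, abs_nonneg l]
  have hItA : IntegrableOn (fun t => t * A t) (Ioo (0:ℝ) 1) := by
    refine integrable_of_bound measurableSet_Ioo hfin (measurable_id.mul hA) (|l| + |L|) ?_
    filter_upwards [hb, hmem] with x hx hxm
    rcases hx with ⟨h1, h2⟩
    rw [abs_mul, abs_of_pos hxm.1]
    have hAx : |A x| ≤ |l| + |L| := by
      rw [abs_le]
      constructor
      · nlinarith [neg_abs_le l, le_abs_self L, abs_nonneg L, abs_nonneg l]
      · nlinarith [le_abs_self L, abs_nonneg l]
    nlinarith [abs_nonneg (A x), hxm.2, hxm.1]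
  have hden : l ≤ ∫ t in (0:ℝ)..1, A t := by
    rw [interval_eq_Ioo]
    calc l = ∫ _ in Ioo (0:ℝ) 1, l := by simp [vol01]
    _ ≤ ∫ t in Ioo (0:ℝ) 1, A t := by
        refine integral_mono_ae (integrable_const l) hIA ?_
        filter_upwards [hb] with x hx using hx.1
  have hnum0 : 0 ≤ ∫ t in (0:ℝ)..1, t * A t := by
    rw [interval_eq_Ioo]
    refine integral_nonneg_of_ae ?_
    filter_upwards [hb, hmem] with x hx hxm
    exact mul_nonneg hxm.1.le (le_trans hl.le hx.1)
  have hnumle : (∫ t in (0:ℝ)..1, t * A t) ≤ ∫ t in (0:ℝ)..1, A t := by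
    rw [interval_eq_Ioo, interval_eq_Ioo]
    refine integral_mono_ae hItA hIA ?_
    filter_upwards [hb, hmem] with x hx hxm
    nlinarith [hx.1, hxm.1, hxm.2, hl]
  have hdpos : 0 < ∫ t in (0:ℝ)..1, A t := lt_of_lt_of_le hl hden
  constructor
  · exact div_nonneg hnum0 hdpos.le
  · rw [gammaOf, div_le_one hdpos]; exact hnumle

set_option maxHeartbeats 1000000 in
lemma gamma_cube {l L : ℝ} {A B : ℝ → ℝ} (hl : 0 < l) (hlL : l ≤ L)
    (hA : Measurable A) (hB : Measurable B)
    (hbA : ∀ᵐ x ∂(volume.restrict (Ioo (0:ℝ) 1)), l ≤ A x ∧ A x ≤ L)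
    (hbB : ∀ᵐ x ∂(volume.restrict (Ioo (0:ℝ) 1)), l ≤ B x ∧ B x ≤ L) :
    l^2 * |gammaOf A - gammaOf B| ^ 3 ≤
      ∫ x in Ioo (0:ℝ) 1, (B x * (x - gammaOf B) - A x * (x - gammaOf A))^2 := by
  set γA := gammaOf A with hγA
  set γB := gammaOf B with hγB
  set E : ℝ → ℝ := fun x => B x * (x - γB) - A x * (x - γA) with hE
  set I : ℝ := ∫ x in Ioo (0:ℝ) 1, (E x)^2 with hI
  have hmemA := gamma_mem hl hA hbA
  have hmemB := gamma_mem hl hB hbB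
  set w : ℝ := |γA - γB| with hw
  have hw0 : 0 ≤ w := abs_nonneg _
  have hEmeas : Measurable E := ((hB.mul (measurable_id.sub measurable_const)).sub
    (hA.mul (measurable_id.sub measurable_const)))
  have hI0 : 0 ≤ I := by
    refine integral_nonneg_of_ae ?_
    filter_upwards with x using sq_nonneg _
  rcases eq_or_lt_of_le hw0 with hweq | hwpos
  · rw [← hweq]; simpa using hI0
  -- set s t
  set s := min γA γB with hs
  set t := max γA γB with ht
  have hts : t - s = w := by rw [hw, hs, ht, max_sub_min_eq_abs, abs_sub_comm]
  have hst : s ≤ t := min_le_max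
  have hsub : Ioo s t ⊆ Ioo (0:ℝ) 1 := by
    intro x hx
    constructor
    · exact lt_of_le_of_lt (le_min hmemA.1 hmemB.1) hx.1
    · exact lt_of_lt_of_le hx.2 (max_le hmemA.2 hmemB.2)
  have hbA' := ae_restrict_of_ae_restrict_of_subset hsub hbA
  have hbB' := ae_restrict_of_ae_restrict_of_subset hsub hbB
  have hmem' : ∀ᵐ x ∂(volume.restrict (Ioo s t)), x ∈ Ioo s t :=
    ae_restrict_mem measurableSet_Ioo
  have hfin : volume (Ioo s t) < ⊤ := by rw [Real.volume_Ioo]; exact ENNReal.ofReal_lt_top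
  have hvol : (volume (Ioo s t)).toReal = w := by
    rw [Real.volume_Ioo, ENNReal.toReal_ofReal (by linarith), hts]
  -- lower bound on |E|
  have hElb : ∀ᵐ x ∂(volume.restrict (Ioo s t)), l * w ≤ |E x| := by
    filter_upwards [hbA', hbB', hmem'] with x hxA hxB hxm
    rcases le_or_gt γB γA with hc | hc
    · have hsB : s = γB := min_eq_right hc
      have htA : t = γA := max_eq_left hc
      have h1 : 0 < x - γB := sub_pos.mpr (hsB ▸ hxm.1)
      have h2 : 0 < γA - x := sub_pos.mpr (htA ▸ hxm.2)
      have hwv : w = γA - γB := by rw [hw, abs_of_nonneg (by linarith)]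
      have : l * w ≤ E x := by
        rw [hwv]
        show l * (γA - γB) ≤ B x * (x - γB) - A x * (x - γA)
        nlinarith [hxA.1, hxB.1, mul_nonneg (sub_nonneg.mpr hxA.1) h2.le,
          mul_nonneg (sub_nonneg.mpr hxB.1) h1.le]
      exact this.trans (le_abs_self _)
    · have hsA : s = γA := min_eq_left hc.le
      have htB : t = γB := max_eq_right hc.le
      have h1 : 0 < x - γA := sub_pos.mpr (hsA ▸ hxm.1)
      have h2 : 0 < γB - x := sub_pos.mpr (htB ▸ hxm.2)
      have hwv : w = γB - γA := by rw [hw, abs_of_nonpos (by linarith)]; ring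
      have : l * w ≤ -E x := by
        rw [hwv]
        show l * (γB - γA) ≤ -(B x * (x - γB) - A x * (x - γA))
        nlinarith [hxA.1, hxB.1, mul_nonneg (sub_nonneg.mpr hxA.1) h1.le,
          mul_nonneg (sub_nonneg.mpr hxB.1) h2.le]
      exact this.trans ((le_abs_self _).trans_eq (abs_neg _))
  -- pointwise bound on |E|
  have hEpt : ∀ x : ℝ, l ≤ A x → A x ≤ L → l ≤ B x → B x ≤ L → x ∈ Ioo (0:ℝ) 1 →
      |E x| ≤ 2 * L := by
    intro x hA1 hA2 hB1 hB2 hx01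
    have h1 : |x - γB| ≤ 1 := by
      rw [abs_le]; constructor
      · nlinarith [hmemB.2, hx01.1]
      · nlinarith [hmemB.1, hx01.2]
    have h2 : |x - γA| ≤ 1 := by
      rw [abs_le]; constructor
      · nlinarith [hmemA.2, hx01.1]
      · nlinarith [hmemA.1, hx01.2]
    have e1 : |B x * (x - γB)| ≤ L := by
      rw [abs_mul, abs_of_pos (lt_of_lt_of_le hl hB1)]
      calc B x * |x - γB| ≤ L * 1 := mul_le_mul hB2 h1 (abs_nonneg _) (hl.le.trans hlL)
      _ = L := mul_one L
    have e2 : |A x * (x - γA)| ≤ L := by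
      rw [abs_mul, abs_of_pos (lt_of_lt_of_le hl hA1)]
      calc A x * |x - γA| ≤ L * 1 := mul_le_mul hA2 h2 (abs_nonneg _) (hl.le.trans hlL)
      _ = L := mul_one L
    calc |E x| = |B x * (x - γB) - A x * (x - γA)| := rfl
    _ ≤ |B x * (x - γB)| + |A x * (x - γA)| := abs_sub _ _
    _ ≤ L + L := add_le_add e1 e2
    _ = 2 * L := by ring
  have hEb : ∀ᵐ x ∂(volume.restrict (Ioo s t)), |E x| ≤ 2 * L := by
    filter_upwards [hbA', hbB', hmem'] with x hxA hxB hxm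
    exact hEpt x hxA.1 hxA.2 hxB.1 hxB.2 (hsub hxm)
  have hIE : IntegrableOn (fun x => |E x|) (Ioo s t) := by
    refine integrable_of_bound measurableSet_Ioo hfin hEmeas.abs (2*L) ?_
    filter_upwards [hEb] with x hx using by rwa [abs_abs]
  have hIE2 : IntegrableOn (fun x => (E x)^2) (Ioo (0:ℝ) 1) := by
    refine integrable_of_bound measurableSet_Ioo (by rw [Real.volume_Ioo]; norm_num)
      (hEmeas.pow_const 2) ((2*L)^2) ?_
    have hEb01 : ∀ᵐ x ∂(volume.restrict (Ioo (0:ℝ) 1)), |E x| ≤ 2 * L := by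
      filter_upwards [hbA, hbB, ae_restrict_mem measurableSet_Ioo] with x hxA hxB hx01
      exact hEpt x hxA.1 hxA.2 hxB.1 hxB.2 hx01
    filter_upwards [hEb01] with x hx
    rw [abs_pow, ← sq_abs]
    exact pow_le_pow_left₀ (abs_nonneg _) (by rwa [abs_abs]) 2
  -- l w^2 ≤ ∫ |E| over strip
  have hlow : l * w * w ≤ ∫ x in Ioo s t, |E x| := by
    calc l * w * w = (volume (Ioo s t)).toReal * (l * w) := by rw [hvol]; ring
    _ = ∫ _ in Ioo s t, l * w := by rw [setIntegral_const, measureReal_def]; simp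
    _ ≤ ∫ x in Ioo s t, |E x| := integral_mono_ae (integrable_const _) hIE hElb
  -- ∫|E| ≤ lw/2 * w + I/(2lw)
  have hlw : 0 < l * w := mul_pos hl hwpos
  have hup : (∫ x in Ioo s t, |E x|) ≤ w * (l * w / 2) + I / (2 * (l * w)) := by
    have hpt : ∀ᵐ x ∂(volume.restrict (Ioo s t)), |E x| ≤ l * w / 2 + (E x)^2 / (2 * (l * w)) := by
      filter_upwards with x
      rw [div_add_div _ _ (by norm_num) (by positivity), le_div_iff₀ (by positivity)]
      nlinarith [sq_nonneg (l * w - |E x|), sq_abs (E x)]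
    have hint2 : IntegrableOn (fun x => l * w / 2 + (E x)^2 / (2 * (l * w))) (Ioo s t) := by
      refine (integrable_const _).add ?_
      exact ((hIE2.mono_set hsub).div_const _)
    calc (∫ x in Ioo s t, |E x|) ≤ ∫ x in Ioo s t, (l * w / 2 + (E x)^2 / (2 * (l * w))) :=
        integral_mono_ae hIE hint2 hpt
    _ = (volume (Ioo s t)).toReal * (l * w / 2) + (∫ x in Ioo s t, (E x)^2) / (2 * (l * w)) := by
        rw [integral_add (integrable_const _) ((hIE2.mono_set hsub).div_const _),
          setIntegral_const, measureReal_def, integral_div]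
        simp
    _ ≤ w * (l * w / 2) + I / (2 * (l * w)) := by
        rw [hvol]
        have hmono : (∫ x in Ioo s t, (E x)^2) ≤ I := by
          rw [hI]
          refine setIntegral_mono_set hIE2 ?_ (HasSubset.Subset.eventuallyLE hsub)
          filter_upwards with x using sq_nonneg _
        gcongr
  have hfinal : l * w * w ≤ w * (l * w / 2) + I / (2 * (l * w)) := hlow.trans hup
  have h4 : l * w * w / 2 ≤ I / (2 * (l * w)) := by linarith
  rw [div_le_div_iff₀ (by norm_num) (by positivity)] at h4
  nlinarith [h4]

set_option maxHeartbeats 1000000 in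
/-- Lemma 6.2 of the paper: there is `C = C(λ,Λ) > 0` such that for all coefficients
`a, b` with `λ ≤ a, b ≤ Λ` a.e. on `(0,1)`, writing `A = 1/a`, `B = 1/b`,
`E'(x) = B(x)(x-γ_B) - A(x)(x-γ_A)`, one has for every `ρ > 0`:
`∫₀¹ (A-B)² ≤ (C/ρ²) (∫₀¹ E'²)^{2/3} + 8 λ⁻² ρ`. -/
theorem stmt3 (lam Lam : ℝ) (hlam : 0 < lam) (hlL : lam ≤ Lam) :
    ∃ C : ℝ, 0 < C ∧
      ∀ a b : ℝ → ℝ, Measurable a → Measurable b →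
        (∀ᵐ x ∂(volume.restrict (Ioo (0:ℝ) 1)), lam ≤ a x ∧ a x ≤ Lam) →
        (∀ᵐ x ∂(volume.restrict (Ioo (0:ℝ) 1)), lam ≤ b x ∧ b x ≤ Lam) →
        ∀ ρ : ℝ, 0 < ρ →
          (∫ x in (0:ℝ)..1, (1 / a x - 1 / b x) ^ 2) ≤
            C / ρ ^ 2 * (∫ x in (0:ℝ)..1,
                ((1 / b x) * (x - gammaOf (fun t => 1 / b t))
                  - (1 / a x) * (x - gammaOf (fun t => 1 / a t))) ^ 2) ^ ((2:ℝ)/3)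
              + 8 * (lam ^ 2)⁻¹ * ρ := by
  have hLam : 0 < Lam := lt_of_lt_of_le hlam hlL
  set L : ℝ := lam⁻¹ with hLdef
  set l : ℝ := Lam⁻¹ with hldef
  have hL : 0 < L := by positivity
  have hl : 0 < l := by positivity
  have hlL' : l ≤ L := by
    rw [hLdef, hldef]
    exact inv_anti₀ hlam hlL
  refine ⟨L^2 * Lam ^ ((4:ℝ)/3) + (4 * L^2) ^ ((1:ℝ)/3), by positivity, ?_⟩
  intro a b ha hb hba hbb ρ hρ
  set A : ℝ → ℝ := fun x => 1 / a x with hAdef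
  set B : ℝ → ℝ := fun x => 1 / b x with hBdef
  have hAm : Measurable A := measurable_const.div ha
  have hBm : Measurable B := measurable_const.div hb
  have hbA : ∀ᵐ x ∂(volume.restrict (Ioo (0:ℝ) 1)), l ≤ A x ∧ A x ≤ L := by
    filter_upwards [hba] with x hx
    have hax : 0 < a x := lt_of_lt_of_le hlam hx.1
    constructor
    · rw [hldef, ← one_div]; exact one_div_le_one_div_of_le hax hx.2
    · rw [hLdef, ← one_div]; exact one_div_le_one_div_of_le hlam hx.1
  have hbB : ∀ᵐ x ∂(volume.restrict (Ioo (0:ℝ) 1)), l ≤ B x ∧ B x ≤ L := by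
    filter_upwards [hbb] with x hx
    have hbx : 0 < b x := lt_of_lt_of_le hlam hx.1
    constructor
    · rw [hldef, ← one_div]; exact one_div_le_one_div_of_le hbx hx.2
    · rw [hLdef, ← one_div]; exact one_div_le_one_div_of_le hlam hx.1
  set γA := gammaOf A with hγA
  set γB := gammaOf B with hγB
  have hmemA : γA ∈ Icc (0:ℝ) 1 := gamma_mem hl hAm hbA
  have hmemB : γB ∈ Icc (0:ℝ) 1 := gamma_mem hl hBm hbB
  set E : ℝ → ℝ := fun x => B x * (x - γB) - A x * (x - γA) with hEdef
  set I : ℝ := ∫ x in Ioo (0:ℝ) 1, (E x)^2 with hIdef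
  have hEmeas : Measurable E := ((hBm.mul (measurable_id.sub measurable_const)).sub
    (hAm.mul (measurable_id.sub measurable_const)))
  have hI0 : 0 ≤ I := integral_nonneg_of_ae (by filter_upwards with x using sq_nonneg _)
  set w : ℝ := |γA - γB| with hwdef
  have hw0 : 0 ≤ w := abs_nonneg _
  have hw1 : w ≤ 1 := by
    rw [hwdef, abs_le]
    constructor
    · nlinarith [hmemA.1, hmemB.2]
    · nlinarith [hmemA.2, hmemB.1]
  have hfin01 : volume (Ioo (0:ℝ) 1) < ⊤ := by rw [Real.volume_Ioo]; norm_num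
  -- pointwise bound on |E|
  have hEpt : ∀ᵐ x ∂(volume.restrict (Ioo (0:ℝ) 1)), |E x| ≤ 2 * L := by
    filter_upwards [hbA, hbB, ae_restrict_mem measurableSet_Ioo] with x hxA hxB hx01
    have h1 : |x - γB| ≤ 1 := by
      rw [abs_le]; constructor
      · nlinarith [hmemB.2, hx01.1]
      · nlinarith [hmemB.1, hx01.2]
    have h2 : |x - γA| ≤ 1 := by
      rw [abs_le]; constructor
      · nlinarith [hmemA.2, hx01.1]
      · nlinarith [hmemA.1, hx01.2]
    have e1 : |B x * (x - γB)| ≤ L := by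
      rw [abs_mul, abs_of_pos (lt_of_lt_of_le hl hxB.1)]
      calc B x * |x - γB| ≤ L * 1 := mul_le_mul hxB.2 h1 (abs_nonneg _) (hl.le.trans hlL')
      _ = L := mul_one L
    have e2 : |A x * (x - γA)| ≤ L := by
      rw [abs_mul, abs_of_pos (lt_of_lt_of_le hl hxA.1)]
      calc A x * |x - γA| ≤ L * 1 := mul_le_mul hxA.2 h2 (abs_nonneg _) (hl.le.trans hlL')
      _ = L := mul_one L
    calc |E x| = |B x * (x - γB) - A x * (x - γA)| := rfl
    _ ≤ |B x * (x - γB)| + |A x * (x - γA)| := abs_sub _ _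
    _ ≤ L + L := add_le_add e1 e2
    _ = 2 * L := by ring
  -- integrability
  have hIE2 : IntegrableOn (fun x => (E x)^2) (Ioo (0:ℝ) 1) := by
    refine integrable_of_bound measurableSet_Ioo hfin01 (hEmeas.pow_const 2) ((2*L)^2) ?_
    filter_upwards [hEpt] with x hx
    rw [abs_pow, ← sq_abs]
    exact pow_le_pow_left₀ (abs_nonneg _) (by rwa [abs_abs]) 2
  have hIB2 : IntegrableOn (fun x => (B x)^2) (Ioo (0:ℝ) 1) := by
    refine integrable_of_bound measurableSet_Ioo hfin01 (hBm.pow_const 2) (L^2) ?_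
    filter_upwards [hbB] with x hx
    rw [abs_pow]
    refine pow_le_pow_left₀ (abs_nonneg _) ?_ 2
    rw [abs_of_pos (lt_of_lt_of_le hl hx.1)]; exact hx.2
  have hIAB2 : IntegrableOn (fun x => (A x - B x)^2) (Ioo (0:ℝ) 1) := by
    refine integrable_of_bound measurableSet_Ioo hfin01 ((hAm.sub hBm).pow_const 2) ((2*L)^2) ?_
    filter_upwards [hbA, hbB] with x hxA hxB
    rw [abs_pow, ← sq_abs]
    refine pow_le_pow_left₀ (abs_nonneg _) ?_ 2
    rw [abs_abs, abs_le]
    constructor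
    · nlinarith [hxA.1, hxB.2, hl, hlL']
    · nlinarith [hxA.2, hxB.1, hl, hlL']
  set δ : ℝ := 4 * ρ with hδdef
  have hδ : 0 < δ := by positivity
  set S : Set ℝ := Ioo (γA - δ) (γA + δ) with hSdef
  -- pointwise main bound
  have hpt : ∀ᵐ x ∂(volume.restrict (Ioo (0:ℝ) 1)),
      (A x - B x)^2 ≤ 2/δ^2 * ((B x)^2 * w^2 + (E x)^2) + L^2 * S.indicator (fun _ => (1:ℝ)) x := by
    filter_upwards [hbA, hbB] with x hxA hxB
    by_cases hc : |x - γA| < δ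
    · have hxS : x ∈ S := by
        rw [hSdef, mem_Ioo]
        rw [abs_lt] at hc
        constructor <;> linarith [hc.1, hc.2]
      rw [indicator_of_mem hxS]
      have h1 : (A x - B x)^2 ≤ L^2 := by
        refine sq_le_sq' ?_ ?_
        · linarith [hxA.1, hxB.2, hl, hlL']
        · linarith [hxA.2, hxB.1, hl, hlL']
      have h2 : 0 ≤ 2/δ^2 * ((B x)^2 * w^2 + (E x)^2) := by positivity
      linarith [h1, h2]
    · have hxS : x ∉ S := fun hxm => hc (abs_lt.mpr ⟨by linarith [hxm.1], by linarith [hxm.2]⟩)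
      rw [indicator_of_notMem hxS, mul_zero, add_zero]
      push_neg at hc
      have h0 : (A x - B x)^2 * (x - γA)^2 = (B x * (γA - γB) - E x)^2 := by
        rw [← mul_pow]
        congr 1
        show (A x - B x) * (x - γA) =
          B x * (γA - γB) - (B x * (x - γB) - A x * (x - γA))
        ring
      have expand : (B x * (γA - γB) - E x)^2 + (B x * (γA - γB) + E x)^2 =
          2 * ((B x)^2 * (γA - γB)^2 + (E x)^2) := by ring
      have h1 : (A x - B x)^2 * (x - γA)^2 ≤ 2 * ((B x)^2 * w^2 + (E x)^2) := by
        rw [hwdef, sq_abs]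
        linarith [sq_nonneg (B x * (γA - γB) + E x), expand, h0.le, h0.ge]
      have h2 : δ^2 ≤ (x - γA)^2 := by
        rw [← sq_abs (x - γA)]; exact pow_le_pow_left₀ hδ.le hc 2
      have h3 : (A x - B x)^2 * δ^2 ≤ 2 * ((B x)^2 * w^2 + (E x)^2) :=
        le_trans (mul_le_mul_of_nonneg_left h2 (sq_nonneg _)) h1
      rw [div_mul_eq_mul_div, le_div_iff₀ (by positivity : (0:ℝ) < δ^2)]
      linarith [h3]
  -- integrate the pointwise bound
  have hf1 : IntegrableOn (fun x => 2/δ^2 * ((B x)^2 * w^2 + (E x)^2)) (Ioo (0:ℝ) 1) :=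
    ((hIB2.mul_const (w^2)).add hIE2).const_mul _
  have hf2 : IntegrableOn (fun x => L^2 * S.indicator (fun _ => (1:ℝ)) x) (Ioo (0:ℝ) 1) :=
    (((integrable_const (1:ℝ)).indicator measurableSet_Ioo).const_mul _)
  have hstep1 : (∫ x in Ioo (0:ℝ) 1, (A x - B x)^2) ≤
      ∫ x in Ioo (0:ℝ) 1,
        (2/δ^2 * ((B x)^2 * w^2 + (E x)^2) + L^2 * S.indicator (fun _ => (1:ℝ)) x) :=
    integral_mono_ae hIAB2 (hf1.add hf2) hpt
  have hsplit : (∫ x in Ioo (0:ℝ) 1,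
        (2/δ^2 * ((B x)^2 * w^2 + (E x)^2) + L^2 * S.indicator (fun _ => (1:ℝ)) x))
      = 2/δ^2 * ((∫ x in Ioo (0:ℝ) 1, (B x)^2) * w^2 + I)
        + L^2 * ((volume.restrict (Ioo (0:ℝ) 1)) S).toReal := by
    rw [integral_add hf1 hf2, integral_const_mul, integral_const_mul,
      integral_add (hIB2.mul_const (w^2)) hIE2, integral_mul_const,
      integral_indicator measurableSet_Ioo, setIntegral_const, measureReal_def]
    simp [hIdef, hSdef]
  have hvS : ((volume.restrict (Ioo (0:ℝ) 1)) S).toReal ≤ 2*δ := by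
    refine ENNReal.toReal_le_of_le_ofReal (by positivity) ?_
    rw [Measure.restrict_apply measurableSet_Ioo]
    refine le_trans (measure_mono inter_subset_left) ?_
    rw [Real.volume_Ioo]
    exact ENNReal.ofReal_le_ofReal (by linarith)
  have hB2le : (∫ x in Ioo (0:ℝ) 1, (B x)^2) ≤ L^2 := by
    have step1 : (∫ x in Ioo (0:ℝ) 1, (B x)^2) ≤ ∫ _ in Ioo (0:ℝ) 1, L^2 := by
      refine integral_mono_ae hIB2 (integrable_const _) ?_
      filter_upwards [hbB] with x hx
      exact pow_le_pow_left₀ (le_trans hl.le hx.1) hx.2 2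
    calc (∫ x in Ioo (0:ℝ) 1, (B x)^2) ≤ ∫ _ in Ioo (0:ℝ) 1, L^2 := step1
    _ = L^2 := by rw [integral_const, measureReal_def, vol01]; simp
  have hB2nonneg : 0 ≤ (∫ x in Ioo (0:ℝ) 1, (B x)^2) :=
    integral_nonneg_of_ae (by filter_upwards with x using sq_nonneg _)
  have hI4 : I ≤ 4*L^2 := by
    have step1 : I ≤ ∫ _ in Ioo (0:ℝ) 1, (2*L)^2 := by
      rw [hIdef]
      refine integral_mono_ae hIE2 (integrable_const _) ?_
      filter_upwards [hEpt] with x hx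
      rw [← sq_abs]
      exact pow_le_pow_left₀ (abs_nonneg _) hx 2
    calc I ≤ ∫ _ in Ioo (0:ℝ) 1, (2*L)^2 := step1
    _ = 4*L^2 := by rw [integral_const, measureReal_def, vol01]; simp; ring
  have hw3 : l^2 * w^3 ≤ I := gamma_cube hl hlL' hAm hBm hbA hbB
  have hIr : (0:ℝ) ≤ I ^ ((2:ℝ)/3) := Real.rpow_nonneg hI0 _
  have hw2 : w^2 ≤ Lam ^ ((4:ℝ)/3) * I ^ ((2:ℝ)/3) := by
    have hcube : w^3 ≤ Lam^2 * I := by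
      have hlinv : Lam^2 * l^2 = 1 := by
        rw [hldef]; field_simp
      calc w^3 = Lam^2 * (l^2 * w^3) := by
            rw [← mul_assoc, hlinv, one_mul]
      _ ≤ Lam^2 * I := mul_le_mul_of_nonneg_left hw3 (by positivity)
    have e1 : ((w^3 : ℝ)) ^ ((2:ℝ)/3) = w^2 := by
      rw [← Real.rpow_natCast w 3, ← Real.rpow_mul hw0,
        show ((3:ℕ):ℝ) * ((2:ℝ)/3) = ((2:ℕ):ℝ) by norm_num, Real.rpow_natCast]
    have e2 : (Lam^2 * I) ^ ((2:ℝ)/3) = Lam ^ ((4:ℝ)/3) * I ^ ((2:ℝ)/3) := by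
      rw [Real.mul_rpow (by positivity) hI0, ← Real.rpow_natCast Lam 2,
        ← Real.rpow_mul hLam.le, show ((2:ℕ):ℝ) * ((2:ℝ)/3) = (4:ℝ)/3 by norm_num]
    calc w^2 = ((w^3 : ℝ)) ^ ((2:ℝ)/3) := e1.symm
    _ ≤ (Lam^2 * I) ^ ((2:ℝ)/3) :=
        Real.rpow_le_rpow (by positivity) hcube (by norm_num)
    _ = Lam ^ ((4:ℝ)/3) * I ^ ((2:ℝ)/3) := e2
  have hIle23 : I ≤ (4*L^2) ^ ((1:ℝ)/3) * I ^ ((2:ℝ)/3) := by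
    have eI : I = I ^ ((1:ℝ)/3) * I ^ ((2:ℝ)/3) := by
      have h := Real.rpow_add' hI0 (show (1:ℝ)/3 + 2/3 ≠ 0 by norm_num)
      rw [show (1:ℝ)/3 + 2/3 = 1 by norm_num, Real.rpow_one] at h
      exact h
    calc I = I ^ ((1:ℝ)/3) * I ^ ((2:ℝ)/3) := eI
    _ ≤ (4*L^2) ^ ((1:ℝ)/3) * I ^ ((2:ℝ)/3) :=
        mul_le_mul_of_nonneg_right (Real.rpow_le_rpow hI0 hI4 (by norm_num)) hIr
  -- assemble
  set C : ℝ := L^2 * Lam ^ ((4:ℝ)/3) + (4 * L^2) ^ ((1:ℝ)/3) with hCdef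
  have hCpos : 0 < C := by rw [hCdef]; positivity
  have main : (∫ x in Ioo (0:ℝ) 1, (A x - B x)^2) ≤ C / ρ^2 * I ^ ((2:ℝ)/3) + 8 * L^2 * ρ := by
    have t1 : (∫ x in Ioo (0:ℝ) 1, (B x)^2) * w^2 ≤ L^2 * (Lam ^ ((4:ℝ)/3) * I ^ ((2:ℝ)/3)) :=
      mul_le_mul hB2le hw2 (sq_nonneg _) (by positivity)
    calc (∫ x in Ioo (0:ℝ) 1, (A x - B x)^2)
        ≤ 2/δ^2 * ((∫ x in Ioo (0:ℝ) 1, (B x)^2) * w^2 + I)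
          + L^2 * ((volume.restrict (Ioo (0:ℝ) 1)) S).toReal := hstep1.trans hsplit.le
    _ ≤ 2/δ^2 * (L^2 * (Lam ^ ((4:ℝ)/3) * I ^ ((2:ℝ)/3)) + (4*L^2) ^ ((1:ℝ)/3) * I ^ ((2:ℝ)/3))
          + L^2 * (2*δ) := by
        refine add_le_add ?_ (mul_le_mul_of_nonneg_left hvS (by positivity))
        exact mul_le_mul_of_nonneg_left (add_le_add t1 hIle23) (by positivity)
    _ = 2/δ^2 * (C * I ^ ((2:ℝ)/3)) + L^2 * (2*δ) := by rw [hCdef]; ring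
    _ ≤ C / ρ^2 * I ^ ((2:ℝ)/3) + 8 * L^2 * ρ := by
        rw [hδdef]
        refine add_le_add ?_ (by nlinarith [hL])
        rw [div_mul_eq_mul_div, div_mul_eq_mul_div, div_le_div_iff₀ (by positivity) (by positivity)]
        nlinarith [mul_nonneg hCpos.le hIr, mul_nonneg (mul_nonneg hCpos.le hIr) (sq_nonneg ρ),
          mul_pos hρ hρ]
  have hL2 : L^2 = (lam^2)⁻¹ := by rw [hLdef, inv_pow]
  rw [interval_eq_Ioo (fun x => (1 / a x - 1 / b x) ^ 2), interval_eq_Ioo]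
  rw [← hL2]
  exact main
end

section
/- Let 0 < λ ≤ Λ and let a, b : (0,1) → ℝ be measurable with λ ≤ a, b ≤ Λ a.e. Write A := 1/a, B := 1/b, γ_A := (∫₀¹ t·A)/(∫₀¹ A), γ_B := (∫₀¹ t·B)/(∫₀¹ B). If A(x)(x - γ_A) = B(x)(x - γ_B) for a.e. x ∈ (0,1) (i.e. u_a' = u_b' a.e., equivalently u_a = u_b), then a = b a.e. on (0,1). In particular, for f = 1 the diffusion coefficient a ∈ 𝒜 is uniquely determined by the solution u_a. -/
open MeasureTheory Real Set

lemma gamma_mem_s4 (lam Lam : ℝ) (hlam : 0 < lam) (hlL : lam ≤ Lam)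
    (a : ℝ → ℝ) (ha : Measurable a)
    (haB : ∀ᵐ x ∂(volume.restrict (Ioo (0:ℝ) 1)), lam ≤ a x ∧ a x ≤ Lam) :
    gammaOf (fun t => 1 / a t) ∈ Ioo (0:ℝ) 1 := by
  have hLam : (0:ℝ) < Lam := lt_of_lt_of_le hlam hlL
  set A : ℝ → ℝ := fun t => 1 / a t with hA
  have hAe : volume.restrict (Ioo (0:ℝ) 1) = volume.restrict (Ioc (0:ℝ) 1) :=
    Measure.restrict_congr_set Ioo_ae_eq_Ioc
  have haB' : ∀ᵐ x ∂(volume.restrict (Ioc (0:ℝ) 1)), lam ≤ a x ∧ a x ≤ Lam := by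
    rw [← hAe]; exact haB
  have hAbd : ∀ᵐ x ∂(volume.restrict (Ioc (0:ℝ) 1)), 1/Lam ≤ A x ∧ A x ≤ 1/lam := by
    filter_upwards [haB'] with x hx
    have hax : 0 < a x := lt_of_lt_of_le hlam hx.1
    exact ⟨one_div_le_one_div_of_le hax hx.2, one_div_le_one_div_of_le hlam hx.1⟩
  have hmem : ∀ᵐ x ∂(volume.restrict (Ioc (0:ℝ) 1)), x ∈ Ioc (0:ℝ) 1 :=
    ae_restrict_mem measurableSet_Ioc
  have hAmeas : Measurable A := measurable_const.div ha
  have intA : IntegrableOn A (Ioc (0:ℝ) 1) := by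
    apply Integrable.mono' (integrable_const (1/lam)) hAmeas.aestronglyMeasurable
    filter_upwards [hAbd, haB'] with x hx hx2
    have hax : 0 < a x := lt_of_lt_of_le hlam hx2.1
    rw [Real.norm_eq_abs, abs_of_pos (by positivity : (0:ℝ) < A x)]
    exact hx.2
  have intTA : IntegrableOn (fun x => x * A x) (Ioc (0:ℝ) 1) := by
    apply Integrable.mono' (integrable_const (1/lam)) (measurable_id.mul hAmeas).aestronglyMeasurable
    filter_upwards [hAbd, haB', hmem] with x hx hx2 hx3
    have hax : 0 < a x := lt_of_lt_of_le hlam hx2.1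
    have hAx : 0 < A x := lt_of_lt_of_le (by positivity) hx.1
    simp only [Pi.mul_apply, Pi.sub_apply, id_eq]
    rw [Real.norm_eq_abs, abs_of_nonneg (mul_nonneg hx3.1.le hAx.le)]
    calc x * A x ≤ 1 * A x := by
          apply mul_le_mul_of_nonneg_right hx3.2 (by positivity)
      _ = A x := one_mul _
      _ ≤ 1/lam := hx.2
  have hIoc : volume (Ioc (0:ℝ) 1) = 1 := by simp
  -- lower bound on ∫ A
  have hIA : 1/Lam ≤ ∫ x in Ioc (0:ℝ) 1, A x := by
    have := integral_mono_ae (integrable_const (1/Lam)) intA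
      (by filter_upwards [hAbd] with x hx using hx.1)
    simpa [hIoc] using this
  have hIApos : 0 < ∫ x in Ioc (0:ℝ) 1, A x := lt_of_lt_of_le (by positivity) hIA
  -- lower bound on ∫ x A
  have hITAlb : ∫ x in Ioc (0:ℝ) 1, x * (1/Lam) ≤ ∫ x in Ioc (0:ℝ) 1, x * A x := by
    apply integral_mono_ae
    · apply Integrable.mono' (integrable_const (1/Lam))
        (measurable_id.mul measurable_const).aestronglyMeasurable
      filter_upwards [hmem] with x hx
      have h0 : (0:ℝ) < 1/Lam := by positivity
      simp only [Pi.mul_apply, Pi.sub_apply, id_eq]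
      rw [Real.norm_eq_abs, abs_of_nonneg (mul_nonneg hx.1.le h0.le)]
      exact mul_le_of_le_one_left h0.le hx.2
    · exact intTA
    · filter_upwards [hAbd, hmem] with x hx hx3
      exact mul_le_mul_of_nonneg_left hx.1 hx3.1.le
  have hIid : ∫ x in Ioc (0:ℝ) 1, x = 1/2 := by
    rw [← intervalIntegral.integral_of_le (by norm_num : (0:ℝ) ≤ 1)]
    simp [integral_id]
  have hITApos : 0 < ∫ x in Ioc (0:ℝ) 1, x * A x := by
    refine lt_of_lt_of_le ?_ hITAlb
    have : ∫ x in Ioc (0:ℝ) 1, x * (1/Lam) = (1/2) * (1/Lam) := by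
      rw [integral_mul_const, hIid]
    rw [this]; positivity
  -- ∫ x A < ∫ A
  have hdiff : ∫ x in Ioc (0:ℝ) 1, (1 - x) * (1/Lam) ≤ ∫ x in Ioc (0:ℝ) 1, (1 - x) * A x := by
    apply integral_mono_ae
    · apply Integrable.mono' (integrable_const (1/Lam))
        ((measurable_const.sub measurable_id).mul measurable_const).aestronglyMeasurable
      filter_upwards [hmem] with x hx
      have h0 : (0:ℝ) < 1/Lam := by positivity
      simp only [Pi.mul_apply, Pi.sub_apply, id_eq]
      rw [Real.norm_eq_abs, abs_of_nonneg (mul_nonneg (by linarith [hx.2]) h0.le)]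
      exact mul_le_of_le_one_left h0.le (by linarith [hx.1.le])
    · exact (intA.sub intTA).congr (by
        filter_upwards with x
        simp only [Pi.sub_apply]
        ring)
    · filter_upwards [hAbd, hmem] with x hx hx3
      exact mul_le_mul_of_nonneg_left hx.1 (by linarith [hx3.2])
  have hlt : ∫ x in Ioc (0:ℝ) 1, x * A x < ∫ x in Ioc (0:ℝ) 1, A x := by
    have h1 : ∫ x in Ioc (0:ℝ) 1, (1 - x) * (1/Lam) = (1/2) * (1/Lam) := by
      rw [integral_mul_const, integral_sub (integrable_const 1) (by
        apply (integrable_const (1:ℝ)).mono' measurable_id.aestronglyMeasurable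
        filter_upwards [hmem] with x hx
        simp only [id_eq]
        rw [Real.norm_eq_abs, abs_of_nonneg hx.1.le]; exact hx.2)]
      simp [hIid, hIoc]
      norm_num
    have h2 : ∫ x in Ioc (0:ℝ) 1, (1 - x) * A x
        = (∫ x in Ioc (0:ℝ) 1, A x) - ∫ x in Ioc (0:ℝ) 1, x * A x := by
      rw [show (fun x => (1-x)*A x) = (fun x => A x - x * A x) from funext fun x => by ring,
        integral_sub intA intTA]
    have : (0:ℝ) < (1/2) * (1/Lam) := by positivity
    linarith [hdiff, h1 ▸ hdiff]
  -- conclude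
  have hgam : gammaOf A = (∫ x in Ioc (0:ℝ) 1, x * A x) / (∫ x in Ioc (0:ℝ) 1, A x) := by
    unfold gammaOf
    rw [intervalIntegral.integral_of_le (by norm_num : (0:ℝ) ≤ 1),
      intervalIntegral.integral_of_le (by norm_num : (0:ℝ) ≤ 1)]
  rw [hgam]
  constructor
  · positivity
  · rw [div_lt_one hIApos]; exact hlt

/-- Uniqueness of the diffusion coefficient in one dimension with right side `f = 1`:
if `λ ≤ a, b ≤ Λ` a.e. on `(0,1)` and the derivatives `u_a' = -A(x)(x-γ_A)` and
`u_b' = -B(x)(x-γ_B)` of the corresponding solutions coincide a.e. (equivalently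
`u_a = u_b`), then `a = b` a.e. on `(0,1)`. -/
theorem stmt4 (lam Lam : ℝ) (hlam : 0 < lam) (hlL : lam ≤ Lam)
    (a b : ℝ → ℝ) (ha : Measurable a) (hb : Measurable b)
    (haB : ∀ᵐ x ∂(volume.restrict (Ioo (0:ℝ) 1)), lam ≤ a x ∧ a x ≤ Lam)
    (hbB : ∀ᵐ x ∂(volume.restrict (Ioo (0:ℝ) 1)), lam ≤ b x ∧ b x ≤ Lam)
    (heq : ∀ᵐ x ∂(volume.restrict (Ioo (0:ℝ) 1)),
      (1 / a x) * (x - gammaOf (fun t => 1 / a t))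
        = (1 / b x) * (x - gammaOf (fun t => 1 / b t))) :
    ∀ᵐ x ∂(volume.restrict (Ioo (0:ℝ) 1)), a x = b x := by
  set γA := gammaOf (fun t => 1 / a t) with hγA
  set γB := gammaOf (fun t => 1 / b t) with hγB
  have hγAmem : γA ∈ Ioo (0:ℝ) 1 := gamma_mem_s4 lam Lam hlam hlL a ha haB
  have hγBmem : γB ∈ Ioo (0:ℝ) 1 := gamma_mem_s4 lam Lam hlam hlL b hb hbB
  -- γA = γB
  have key : ∀ (c d : ℝ → ℝ) (γC γD : ℝ), γC ∈ Ioo (0:ℝ) 1 → γD ∈ Ioo (0:ℝ) 1 →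
      (∀ᵐ x ∂(volume.restrict (Ioo (0:ℝ) 1)), lam ≤ c x ∧ c x ≤ Lam) →
      (∀ᵐ x ∂(volume.restrict (Ioo (0:ℝ) 1)), lam ≤ d x ∧ d x ≤ Lam) →
      (∀ᵐ x ∂(volume.restrict (Ioo (0:ℝ) 1)),
        (1 / c x) * (x - γC) = (1 / d x) * (x - γD)) →
      ¬ (γC < γD) := by
    intro c d γC γD hC hD hcB hdB heq' hlt
    have hsub : Ioo γC γD ⊆ Ioo (0:ℝ) 1 := fun x hx =>
      ⟨lt_trans hC.1 hx.1, lt_trans hx.2 hD.2⟩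
    have hmono : volume.restrict (Ioo γC γD) ≤ volume.restrict (Ioo (0:ℝ) 1) :=
      Measure.restrict_mono hsub le_rfl
    have hne : (volume.restrict (Ioo γC γD)) ≠ 0 := by
      intro h
      have : volume (Ioo γC γD) = 0 := by
        have := congrArg (fun μ => μ (Ioo γC γD)) h
        simpa [Measure.restrict_apply, measurableSet_Ioo] using this
      rw [Real.volume_Ioo] at this
      have : γD - γC ≤ 0 := by
        by_contra hcon
        push_neg at hcon
        rw [ENNReal.ofReal_eq_zero] at this
        linarith
      linarith [hlt]
    haveI : Filter.NeBot (ae (volume.restrict (Ioo γC γD))) := ae_neBot.2 hne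
    have h1 : ∀ᵐ x ∂(volume.restrict (Ioo γC γD)),
        ((lam ≤ c x ∧ c x ≤ Lam) ∧ (lam ≤ d x ∧ d x ≤ Lam)) ∧
        (1 / c x) * (x - γC) = (1 / d x) * (x - γD) :=
      Filter.Eventually.filter_mono (ae_mono hmono) (((hcB.and hdB).and heq'))
    have h2 : ∀ᵐ x ∂(volume.restrict (Ioo γC γD)), x ∈ Ioo γC γD :=
      ae_restrict_mem measurableSet_Ioo
    obtain ⟨x, ⟨⟨hcx, hdx⟩, hex⟩, hxm⟩ := (h1.and h2).exists
    have hcx0 : 0 < c x := lt_of_lt_of_le hlam hcx.1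
    have hdx0 : 0 < d x := lt_of_lt_of_le hlam hdx.1
    have hL : 0 < (1 / c x) * (x - γC) := by
      have : 0 < x - γC := sub_pos.2 hxm.1
      positivity
    have hR : (1 / d x) * (x - γD) < 0 := by
      have h1 : x - γD < 0 := sub_neg.2 hxm.2
      have h2 : 0 < 1 / d x := by positivity
      exact mul_neg_of_pos_of_neg h2 h1
    linarith [hex ▸ hL]
  have hγeq : γA = γB := by
    rcases lt_trichotomy γA γB with h | h | h
    · exact absurd h (key a b γA γB hγAmem hγBmem haB hbB heq)
    · exact h
    · exact absurd h (key b a γB γA hγBmem hγAmem hbB haB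
        (by filter_upwards [heq] with x hx using hx.symm))
  -- a.e. x ≠ γA
  have hne : ∀ᵐ x ∂(volume.restrict (Ioo (0:ℝ) 1)), x ≠ γA := by
    apply Filter.Eventually.filter_mono (ae_mono Measure.restrict_le_self)
    rw [ae_iff]
    have : {x : ℝ | ¬ x ≠ γA} = {γA} := by ext x; simp
    rw [this]
    exact measure_singleton γA
  filter_upwards [heq, haB, hbB, hne] with x hx hax hbx hxne
  rw [← hγeq] at hx
  have hax0 : 0 < a x := lt_of_lt_of_le hlam hax.1
  have hbx0 : 0 < b x := lt_of_lt_of_le hlam hbx.1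
  have h1 : (1 : ℝ) / a x = 1 / b x :=
    mul_right_cancel₀ (sub_ne_zero.2 hxne) hx
  field_simp at h1
  linarith [h1]
end

section
/- Let 0 < λ ≤ Λ. There exists a constant C > 0 depending only on λ and Λ such that for all measurable a, b : (0,1) → ℝ with λ ≤ a, b ≤ Λ a.e., one has ‖a - b‖_{L²(0,1)} ≤ C·(∫₀¹ (u_a'(x) - u_b'(x))² dx)^{1/9}, where u_a'(x) = -A(x)(x - γ_A) and u_b'(x) = -B(x)(x - γ_B) with A := 1/a, B := 1/b. (Equivalently, ‖a - b‖_{L²(0,1)} ≤ C‖u_a - u_b‖_{H¹₀(0,1)}^{2/9}.) -/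
open MeasureTheory Real Set

lemma intOn01 {f : ℝ → ℝ} (hf : Measurable f) {c : ℝ}
    (hb : ∀ᵐ x ∂(volume.restrict (Ioo (0:ℝ) 1)), |f x| ≤ c) :
    IntegrableOn f (Ioo (0:ℝ) 1) := by
  refine ((integrableOn_const_iff (C := c)).mpr (Or.inr ?_)).mono' hf.aestronglyMeasurable hb
  simp

lemma int_Ioo_id : ∫ x in Ioo (0:ℝ) 1, x = 1/2 := by
  rw [Measure.restrict_congr_set MeasureTheory.Ioo_ae_eq_Ioc, ← intervalIntegral.integral_of_le zero_le_one]
  simp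

lemma int_Ioo_one_sub : ∫ x in Ioo (0:ℝ) 1, (1 - x) = 1/2 := by
  rw [Measure.restrict_congr_set MeasureTheory.Ioo_ae_eq_Ioc, ← intervalIntegral.integral_of_le zero_le_one]
  simp [intervalIntegral.integral_sub intervalIntegrable_const intervalIntegral.intervalIntegrable_id]
  norm_num

lemma gamma_bounds {A : ℝ → ℝ} {α β : ℝ} (hα : 0 < α) (hαβ : α ≤ β) (hm : Measurable A)
    (hb : ∀ᵐ x ∂(volume.restrict (Ioo (0:ℝ) 1)), α ≤ A x ∧ A x ≤ β) :
    α/(2*β) ≤ gammaOf A ∧ gammaOf A ≤ 1 - α/(2*β) := by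
  have hβ : 0 < β := hα.trans_le hαβ
  have hmem : ∀ᵐ x ∂(volume.restrict (Ioo (0:ℝ) 1)), x ∈ Ioo (0:ℝ) 1 :=
    ae_restrict_mem measurableSet_Ioo
  have hIA : IntegrableOn A (Ioo (0:ℝ) 1) := by
    refine intOn01 hm (c := β) ?_
    filter_upwards [hb] with x hx
    rw [abs_le]; constructor <;> nlinarith [hx.1, hx.2]
  have hIxA : IntegrableOn (fun x => x * A x) (Ioo (0:ℝ) 1) := by
    refine intOn01 (measurable_id.mul hm) (c := β) ?_
    filter_upwards [hb, hmem] with x hx hx01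
    rw [abs_le]; constructor <;> nlinarith [hx.1, hx.2, hx01.1, hx01.2]
  set S := ∫ x in Ioo (0:ℝ) 1, A x with hSdef
  set T := ∫ x in Ioo (0:ℝ) 1, x * A x with hTdef
  have hgamma : gammaOf A = T / S := by
    rw [gammaOf, hSdef, hTdef,
      Measure.restrict_congr_set MeasureTheory.Ioo_ae_eq_Ioc,
      ← intervalIntegral.integral_of_le zero_le_one,
      ← intervalIntegral.integral_of_le zero_le_one]
  have hS_lb : α ≤ S := by
    have := integral_mono_ae (μ := volume.restrict (Ioo (0:ℝ) 1))
      ((integrableOn_const_iff (C := α)).mpr (Or.inr (by simp))) hIA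
      (by filter_upwards [hb] with x hx using hx.1)
    simpa using this
  have hS_ub : S ≤ β := by
    have := integral_mono_ae (μ := volume.restrict (Ioo (0:ℝ) 1)) hIA
      ((integrableOn_const_iff (C := β)).mpr (Or.inr (by simp)))
      (by filter_upwards [hb] with x hx using hx.2)
    simpa using this
  have hT_lb : α/2 ≤ T := by
    have h1 : ∫ x in Ioo (0:ℝ) 1, α * x = α/2 := by
      rw [integral_const_mul, int_Ioo_id]; ring
    have := integral_mono_ae (μ := volume.restrict (Ioo (0:ℝ) 1))
      ((intOn01 (f := fun x => α * x) (by fun_prop) (c := |α|)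
        (by filter_upwards [hmem] with x hx
            rw [abs_mul]
            calc |α| * |x| ≤ |α| * 1 := by
                  exact mul_le_mul_of_nonneg_left (abs_le.mpr ⟨by linarith [hx.1], hx.2.le⟩) (abs_nonneg _)
              _ = |α| := mul_one _))) hIxA
      (by filter_upwards [hb, hmem] with x hx hx01
          exact mul_le_mul_of_nonneg_right hx.1 hx01.1.le |>.trans_eq (mul_comm _ _) |>.trans_eq rfl)
    rw [h1] at this
    exact this
  have hST : α/2 ≤ S - T := by
    have hsub : S - T = ∫ x in Ioo (0:ℝ) 1, (A x - x * A x) := (integral_sub hIA hIxA).symm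
    have h1 : ∫ x in Ioo (0:ℝ) 1, α * (1 - x) = α/2 := by
      rw [integral_const_mul, int_Ioo_one_sub]; ring
    have hint2 : IntegrableOn (fun x => A x - x * A x) (Ioo (0:ℝ) 1) := hIA.sub hIxA
    have := integral_mono_ae (μ := volume.restrict (Ioo (0:ℝ) 1))
      ((intOn01 (f := fun x => α * (1 - x)) (by fun_prop) (c := |α|)
        (by filter_upwards [hmem] with x hx
            rw [abs_mul]
            have : |1 - x| ≤ 1 := abs_le.mpr ⟨by linarith [hx.2], by linarith [hx.1]⟩
            calc |α| * |1-x| ≤ |α| * 1 := mul_le_mul_of_nonneg_left this (abs_nonneg _)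
              _ = |α| := mul_one _))) hint2
      (by filter_upwards [hb, hmem] with x hx hx01
          have : α * (1 - x) ≤ A x * (1 - x) :=
            mul_le_mul_of_nonneg_right hx.1 (by linarith [hx01.2])
          nlinarith)
    rw [h1] at this
    rw [hsub]
    exact this
  have hS0 : 0 < S := hα.trans_le hS_lb
  have hT0 : 0 < T := by nlinarith
  constructor
  · rw [hgamma, div_le_div_iff₀ (by positivity) hS0]
    nlinarith
  · rw [hgamma, div_le_iff₀ hS0]
    have h1 : α/(2*β) * β = α/2 := by field_simp
    have h2 : α/(2*β) * S ≤ α/(2*β) * β :=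
      mul_le_mul_of_nonneg_left hS_ub (by positivity)
    nlinarith


lemma e_sq_integrable {lam Lam : ℝ} (hlam : 0 < lam) (hlL : lam ≤ Lam)
    {A B : ℝ → ℝ} (hmA : Measurable A) (hmB : Measurable B)
    (hbA : ∀ᵐ x ∂(volume.restrict (Ioo (0:ℝ) 1)), 1/Lam ≤ A x ∧ A x ≤ 1/lam)
    (hbB : ∀ᵐ x ∂(volume.restrict (Ioo (0:ℝ) 1)), 1/Lam ≤ B x ∧ B x ≤ 1/lam) :
    IntegrableOn (fun x => (A x * (x - gammaOf A) - B x * (x - gammaOf B))^2) (Ioo (0:ℝ) 1) := by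
  have hLam : 0 < Lam := hlam.trans_le hlL
  have hα : (0:ℝ) < 1/Lam := by positivity
  have hαβ : (1:ℝ)/Lam ≤ 1/lam := by
    apply one_div_le_one_div_of_le hlam hlL
  obtain ⟨hgA1, hgA2⟩ := gamma_bounds hα hαβ hmA hbA
  obtain ⟨hgB1, hgB2⟩ := gamma_bounds hα hαβ hmB hbB
  have hg0 : 0 < (1/Lam)/(2*(1/lam)) := by positivity
  have hg1 : (1/Lam)/(2*(1/lam)) ≤ 1 := by
    rw [div_le_one (by positivity)]
    have : (1:ℝ)/Lam ≤ 1/lam := hαβ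
    nlinarith [one_div_pos.mpr hlam]
  refine intOn01 (by fun_prop) (c := (2/lam + 2/lam)^2) ?_
  filter_upwards [hbA, hbB, ae_restrict_mem measurableSet_Ioo] with x hA hB hx
  have h1 : |A x * (x - gammaOf A)| ≤ 2/lam := by
    rw [abs_mul]
    have hA' : |A x| ≤ 1/lam := abs_le.mpr ⟨by nlinarith [hA.1, hA.2], hA.2⟩
    have hg : |x - gammaOf A| ≤ 2 := by
      rw [abs_le]
      constructor <;> nlinarith [hx.1, hx.2, hg0, hg1, hgA1, hgA2]
    calc |A x| * |x - gammaOf A| ≤ (1/lam) * 2 :=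
          mul_le_mul hA' hg (abs_nonneg _) (by positivity)
      _ = 2/lam := by ring
  have h2 : |B x * (x - gammaOf B)| ≤ 2/lam := by
    rw [abs_mul]
    have hB' : |B x| ≤ 1/lam := abs_le.mpr ⟨by nlinarith [hB.1, hB.2], hB.2⟩
    have hg : |x - gammaOf B| ≤ 2 := by
      rw [abs_le]
      constructor <;> nlinarith [hx.1, hx.2, hg0, hg1, hgB1, hgB2]
    calc |B x| * |x - gammaOf B| ≤ (1/lam) * 2 :=
          mul_le_mul hB' hg (abs_nonneg _) (by positivity)
      _ = 2/lam := by ring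
  have := abs_sub (A x * (x - gammaOf A)) (B x * (x - gammaOf B))
  calc |(A x * (x - gammaOf A) - B x * (x - gammaOf B))^2|
      = |A x * (x - gammaOf A) - B x * (x - gammaOf B)|^2 := abs_pow _ 2
    _ ≤ (2/lam + 2/lam)^2 := pow_le_pow_left₀ (abs_nonneg _) (this.trans (by linarith)) 2

lemma gamma_dist {lam Lam : ℝ} (hlam : 0 < lam) (hlL : lam ≤ Lam)
    {A B : ℝ → ℝ} (hmA : Measurable A) (hmB : Measurable B)
    (hbA : ∀ᵐ x ∂(volume.restrict (Ioo (0:ℝ) 1)), 1/Lam ≤ A x ∧ A x ≤ 1/lam)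
    (hbB : ∀ᵐ x ∂(volume.restrict (Ioo (0:ℝ) 1)), 1/Lam ≤ B x ∧ B x ≤ 1/lam) :
    |gammaOf A - gammaOf B|^3 ≤
      Lam^2 * (∫ x in Ioo (0:ℝ) 1, (A x * (x - gammaOf A) - B x * (x - gammaOf B))^2) := by
  have hLam : 0 < Lam := hlam.trans_le hlL
  have hα : (0:ℝ) < 1/Lam := by positivity
  have hαβ : (1:ℝ)/Lam ≤ 1/lam := one_div_le_one_div_of_le hlam hlL
  obtain ⟨hgA1, hgA2⟩ := gamma_bounds hα hαβ hmA hbA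
  obtain ⟨hgB1, hgB2⟩ := gamma_bounds hα hαβ hmB hbB
  have hg0 : 0 < (1/Lam)/(2*(1/lam)) := by positivity
  set γ₁ := gammaOf A
  set γ₂ := gammaOf B
  set e := fun x => A x * (x - γ₁) - B x * (x - γ₂) with he
  set ℓ := |γ₁ - γ₂| with hℓ
  have hℓ0 : 0 ≤ ℓ := abs_nonneg _
  set m := min γ₁ γ₂
  set M := max γ₁ γ₂
  have hmM : M - m = ℓ := (max_sub_min_eq_abs γ₁ γ₂).trans (abs_sub_comm _ _)
  have hsub : Ioo m M ⊆ Ioo (0:ℝ) 1 := by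
    intro x hx
    constructor
    · have : 0 < m := lt_of_lt_of_le hg0 (le_min hgA1 hgB1)
      linarith [hx.1]
    · have : M ≤ 1 - (1/Lam)/(2*(1/lam)) := max_le hgA2 hgB2
      have := hx.2
      nlinarith
  have hIe2 : IntegrableOn (fun x => (e x)^2) (Ioo (0:ℝ) 1) :=
    e_sq_integrable hlam hlL hmA hmB hbA hbB
  have hptwise : ∀ᵐ x ∂(volume.restrict (Ioo m M)), (ℓ/Lam)^2 ≤ (e x)^2 := by
    have hA' := ae_restrict_of_ae_restrict_of_subset hsub hbA
    have hB' := ae_restrict_of_ae_restrict_of_subset hsub hbB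
    filter_upwards [hA', hB', ae_restrict_mem measurableSet_Ioo] with x hA hB hx
    rcases le_or_gt γ₁ γ₂ with h | h
    · have hm' : m = γ₁ := min_eq_left h
      have hM' : M = γ₂ := max_eq_right h
      have hx1 : γ₁ < x := hm' ▸ hx.1
      have hx2 : x < γ₂ := hM' ▸ hx.2
      have hle : ℓ/Lam ≤ e x := by
        have hℓ' : ℓ = γ₂ - γ₁ := by rw [hℓ, abs_sub_comm, abs_of_nonneg (by linarith)]
        have k1 : (1/Lam) * (x - γ₁) ≤ A x * (x - γ₁) :=
          mul_le_mul_of_nonneg_right hA.1 (by linarith)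
        have k2 : (1/Lam) * (γ₂ - x) ≤ B x * (γ₂ - x) :=
          mul_le_mul_of_nonneg_right hB.1 (by linarith)
        have : e x = A x * (x - γ₁) + B x * (γ₂ - x) := by rw [he]; ring
        rw [this, hℓ']
        have : (γ₂ - γ₁)/Lam = (1/Lam) * (x - γ₁) + (1/Lam) * (γ₂ - x) := by field_simp; ring
        linarith
      exact pow_le_pow_left₀ (by positivity) hle 2
    · have hm' : m = γ₂ := min_eq_right h.le
      have hM' : M = γ₁ := max_eq_left h.le
      have hx1 : γ₂ < x := hm' ▸ hx.1
      have hx2 : x < γ₁ := hM' ▸ hx.2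
      have hle : ℓ/Lam ≤ -(e x) := by
        have hℓ' : ℓ = γ₁ - γ₂ := by rw [hℓ, abs_of_nonneg (by linarith)]
        have k1 : (1/Lam) * (γ₁ - x) ≤ A x * (γ₁ - x) :=
          mul_le_mul_of_nonneg_right hA.1 (by linarith)
        have k2 : (1/Lam) * (x - γ₂) ≤ B x * (x - γ₂) :=
          mul_le_mul_of_nonneg_right hB.1 (by linarith)
        have : -(e x) = A x * (γ₁ - x) + B x * (x - γ₂) := by rw [he]; ring
        rw [this, hℓ']
        have : (γ₁ - γ₂)/Lam = (1/Lam) * (γ₁ - x) + (1/Lam) * (x - γ₂) := by field_simp; ring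
        linarith
      have := pow_le_pow_left₀ (by positivity) hle 2
      simpa using this
  have hImM : IntegrableOn (fun x => (e x)^2) (Ioo m M) := hIe2.mono_set hsub
  have hmle : m ≤ M := min_le_max
  have step1 : (ℓ/Lam)^2 * ℓ ≤ ∫ x in Ioo m M, (e x)^2 := by
    have h := integral_mono_ae (μ := volume.restrict (Ioo m M))
      ((integrableOn_const_iff (C := (ℓ/Lam)^2)).mpr (Or.inr (by simp [Real.volume_Ioo]))) hImM hptwise
    rw [integral_const] at h
    have : (volume.restrict (Ioo m M)) univ = ENNReal.ofReal (M - m) := by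
      simp [Real.volume_Ioo]
    rw [measureReal_def, this] at h
    rw [ENNReal.toReal_ofReal (by linarith)] at h
    rw [smul_eq_mul] at h
    calc (ℓ/Lam)^2 * ℓ = (M - m) * (ℓ/Lam)^2 := by rw [hmM]; ring
      _ ≤ _ := h
  have step2 : ∫ x in Ioo m M, (e x)^2 ≤ ∫ x in Ioo (0:ℝ) 1, (e x)^2 :=
    setIntegral_mono_set hIe2 (Filter.Eventually.of_forall fun x => sq_nonneg _)
      (HasSubset.Subset.eventuallyLE hsub)
  have hkey := step1.trans step2
  have hid : Lam^2*((ℓ/Lam)^2*ℓ) = ℓ^3 := by field_simp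
  have := mul_le_mul_of_nonneg_left hkey (sq_nonneg Lam)
  rw [hid] at this
  exact this

lemma master {lam Lam : ℝ} (hlam : 0 < lam) (hlL : lam ≤ Lam)
    {A B : ℝ → ℝ} (hmA : Measurable A) (hmB : Measurable B)
    (hbA : ∀ᵐ x ∂(volume.restrict (Ioo (0:ℝ) 1)), 1/Lam ≤ A x ∧ A x ≤ 1/lam)
    (hbB : ∀ᵐ x ∂(volume.restrict (Ioo (0:ℝ) 1)), 1/Lam ≤ B x ∧ B x ≤ 1/lam)
    {δ : ℝ} (hδ : 0 < δ) :
    ∫ x in Ioo (0:ℝ) 1, (A x - B x)^2 ≤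
      2/δ^2 * (∫ x in Ioo (0:ℝ) 1, (A x * (x - gammaOf A) - B x * (x - gammaOf B))^2)
      + 2*(1/lam)^2*|gammaOf A - gammaOf B|^2/δ^2 + 2*(1/lam)^2*δ := by
  have hLam : 0 < Lam := hlam.trans_le hlL
  set β := 1/lam with hβ
  have hβ0 : 0 < β := by positivity
  set γ₁ := gammaOf A
  set γ₂ := gammaOf B
  set e := fun x => A x * (x - γ₁) - B x * (x - γ₂) with he
  set ℓ := |γ₁ - γ₂| with hℓ
  set s : Set ℝ := Ioo (γ₁-δ) (γ₁+δ) with hs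
  have hIe2 : IntegrableOn (fun x => (e x)^2) (Ioo (0:ℝ) 1) :=
    e_sq_integrable hlam hlL hmA hmB hbA hbB
  have hIAB2 : IntegrableOn (fun x => (A x - B x)^2) (Ioo (0:ℝ) 1) := by
    refine intOn01 (by fun_prop) (c := β^2) ?_
    filter_upwards [hbA, hbB] with x hA hB
    rw [abs_of_nonneg (sq_nonneg _)]
    nlinarith [hA.1, hA.2, hB.1, hB.2, one_div_pos.mpr hLam]
  have h1int : Integrable (fun x => 2/δ^2 * (e x)^2) (volume.restrict (Ioo (0:ℝ) 1)) :=
    hIe2.const_mul _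
  have hconstint : Integrable (fun _ : ℝ => 2*β^2*ℓ^2/δ^2) (volume.restrict (Ioo (0:ℝ) 1)) :=
    (integrableOn_const_iff (C := 2*β^2*ℓ^2/δ^2)).mpr (Or.inr (by simp))
  have hindint : Integrable (s.indicator (fun _ => β^2)) (volume.restrict (Ioo (0:ℝ) 1)) :=
    ((integrableOn_const_iff (C := β^2)).mpr (Or.inr (by simp))).indicator measurableSet_Ioo
  have hpt : ∀ᵐ x ∂(volume.restrict (Ioo (0:ℝ) 1)),
      (A x - B x)^2 ≤ 2/δ^2 * (e x)^2 + 2*β^2*ℓ^2/δ^2 + s.indicator (fun _ => β^2) x := by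
    filter_upwards [hbA, hbB] with x hA hB
    by_cases hxδ : |x - γ₁| < δ
    · have hmem : x ∈ s := by
        rw [hs, mem_Ioo]
        rw [abs_lt] at hxδ
        constructor <;> linarith [hxδ.1, hxδ.2]
      rw [indicator_of_mem hmem]
      have h2 : (A x - B x)^2 ≤ β^2 := by
        nlinarith [hA.1, hA.2, hB.1, hB.2, one_div_pos.mpr hLam]
      have h3 : 0 ≤ 2/δ^2 * (e x)^2 := by positivity
      have h4 : 0 ≤ 2*β^2*ℓ^2/δ^2 := by positivity
      linarith
    · push_neg at hxδ
      have hd2 : δ^2 ≤ (x-γ₁)^2 := by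
        have := pow_le_pow_left₀ hδ.le hxδ 2
        rwa [sq_abs] at this
      have key : ((A x - B x)*(x-γ₁))^2 ≤ 2*(e x)^2 + 2*β^2*ℓ^2 := by
        have hid : (A x - B x)*(x - γ₁) = e x + B x*(γ₁-γ₂) := by simp only [he]; ring
        have hl2 : ℓ^2 = (γ₁-γ₂)^2 := sq_abs _
        have hB2 : (B x)^2 ≤ β^2 := by
          nlinarith [hB.1, hB.2, one_div_pos.mpr hLam]
        have hB2' : (B x)^2*(γ₁-γ₂)^2 ≤ β^2*ℓ^2 := by
          rw [hl2]
          nlinarith [sq_nonneg (γ₁-γ₂)]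
        rw [hid]
        nlinarith [sq_nonneg (e x - B x*(γ₁-γ₂))]
      have h1 : (A x - B x)^2 * δ^2 ≤ ((A x - B x)*(x-γ₁))^2 := by
        have := mul_le_mul_of_nonneg_left hd2 (sq_nonneg (A x - B x))
        calc (A x - B x)^2*δ^2 ≤ (A x - B x)^2*(x-γ₁)^2 := this
          _ = ((A x - B x)*(x-γ₁))^2 := by ring
      have hmain : (A x - B x)^2 ≤ (2*(e x)^2 + 2*β^2*ℓ^2)/δ^2 := by
        rw [le_div_iff₀ (by positivity)]
        exact h1.trans key
      have heq : (2*(e x)^2 + 2*β^2*ℓ^2)/δ^2 = 2/δ^2 * (e x)^2 + 2*β^2*ℓ^2/δ^2 := by ring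
      have hind : 0 ≤ s.indicator (fun _ : ℝ => β^2) x :=
        indicator_nonneg (fun _ _ => by positivity) x
      linarith [hmain.trans_eq heq]
  have hmono : ∫ x in Ioo (0:ℝ) 1, (A x - B x)^2 ≤
      ∫ x in Ioo (0:ℝ) 1, (2/δ^2 * (e x)^2 + 2*β^2*ℓ^2/δ^2 + s.indicator (fun _ => β^2) x) :=
    integral_mono_ae hIAB2 ((h1int.add hconstint).add hindint) hpt
  have hsum1 : Integrable (fun x => 2/δ^2 * (e x)^2 + 2*β^2*ℓ^2/δ^2)
      (volume.restrict (Ioo (0:ℝ) 1)) := h1int.add hconstint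
  rw [integral_add hsum1 hindint, integral_add h1int hconstint,
    integral_const_mul, integral_const, integral_indicator_const _ measurableSet_Ioo] at hmono
  have hμuniv : (volume.restrict (Ioo (0:ℝ) 1)) univ = 1 := by simp
  simp only [measureReal_def] at hmono
  rw [hμuniv] at hmono
  have hindbd : ((volume.restrict (Ioo (0:ℝ) 1)) s).toReal • β^2 ≤ 2*β^2*δ := by
    rw [smul_eq_mul]
    have h1 : (volume.restrict (Ioo (0:ℝ) 1)) s ≤ volume s := by
      rw [Measure.restrict_apply measurableSet_Ioo]
      exact measure_mono inter_subset_left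
    have h2 : volume s = ENNReal.ofReal (2*δ) := by
      rw [hs, Real.volume_Ioo]
      congr 1
      ring
    have h3 : ((volume.restrict (Ioo (0:ℝ) 1)) s).toReal ≤ 2*δ := by
      have := ENNReal.toReal_mono (by rw [h2]; exact ENNReal.ofReal_ne_top) h1
      rwa [h2, ENNReal.toReal_ofReal (by positivity)] at this
    nlinarith [sq_nonneg β]
  simp only [smul_eq_mul, ENNReal.toReal_one, one_mul] at hmono hindbd ⊢
  linarith [hmono, hindbd]

set_option maxHeartbeats 1000000 in
/-- Theorem 6.3 of the paper: there is `C = C(λ,Λ) > 0` such that for all measurable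
`a, b` with `λ ≤ a, b ≤ Λ` a.e. on `(0,1)`,
`‖a - b‖_{L²(0,1)} ≤ C (∫₀¹ (u_a' - u_b')²)^{1/9} = C ‖u_a - u_b‖_{H¹₀(0,1)}^{2/9}`,
where `u_a'(x) = -(1/a(x))(x - γ_A)` and `u_b'(x) = -(1/b(x))(x - γ_B)`. -/
theorem stmt5 (lam Lam : ℝ) (hlam : 0 < lam) (hlL : lam ≤ Lam) :
    ∃ C : ℝ, 0 < C ∧
      ∀ a b : ℝ → ℝ, Measurable a → Measurable b →
        (∀ᵐ x ∂(volume.restrict (Ioo (0:ℝ) 1)), lam ≤ a x ∧ a x ≤ Lam) →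
        (∀ᵐ x ∂(volume.restrict (Ioo (0:ℝ) 1)), lam ≤ b x ∧ b x ≤ Lam) →
        (∫ x in (0:ℝ)..1, (a x - b x) ^ 2) ^ ((1:ℝ)/2) ≤
          C * (∫ x in (0:ℝ)..1,
              ((-(1 / a x)) * (x - gammaOf (fun t => 1 / a t))
                - (-(1 / b x)) * (x - gammaOf (fun t => 1 / b t))) ^ 2) ^ ((1:ℝ)/9) := by
  have hLam : 0 < Lam := hlam.trans_le hlL
  set K : ℝ := 2 + 2*(1/lam)^2*Lam^((4:ℝ)/3) + 2*(1/lam)^2 with hK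
  have hKpos : 0 < K := by positivity
  set C0 : ℝ := Lam^4 * K + Lam^2 with hC0
  have hC0pos : 0 < C0 := by positivity
  clear_value K C0
  refine ⟨C0 ^ ((1:ℝ)/2), Real.rpow_pos_of_pos hC0pos _, ?_⟩
  intro a b hma hmb haa hab
  set A : ℝ → ℝ := fun t => 1 / a t with hAdef
  set B : ℝ → ℝ := fun t => 1 / b t with hBdef
  have hmA : Measurable A := by fun_prop
  have hmB : Measurable B := by fun_prop
  have hbA : ∀ᵐ x ∂(volume.restrict (Ioo (0:ℝ) 1)), 1/Lam ≤ A x ∧ A x ≤ 1/lam := by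
    filter_upwards [haa] with x hx
    have hax : 0 < a x := lt_of_lt_of_le hlam hx.1
    exact ⟨one_div_le_one_div_of_le hax hx.2, one_div_le_one_div_of_le hlam hx.1⟩
  have hbB : ∀ᵐ x ∂(volume.restrict (Ioo (0:ℝ) 1)), 1/Lam ≤ B x ∧ B x ≤ 1/lam := by
    filter_upwards [hab] with x hx
    have hbx : 0 < b x := lt_of_lt_of_le hlam hx.1
    exact ⟨one_div_le_one_div_of_le hbx hx.2, one_div_le_one_div_of_le hlam hx.1⟩
  set γ₁ := gammaOf A with hγ₁
  set γ₂ := gammaOf B with hγ₂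
  set E : ℝ := ∫ x in Ioo (0:ℝ) 1, (A x * (x - γ₁) - B x * (x - γ₂))^2 with hE
  have hE0 : 0 ≤ E := integral_nonneg fun x => sq_nonneg _
  set I : ℝ := ∫ x in Ioo (0:ℝ) 1, (a x - b x)^2 with hI
  have hI0 : 0 ≤ I := integral_nonneg fun x => sq_nonneg _
  set ℓ : ℝ := |γ₁ - γ₂| with hℓ
  have hγd : ℓ^3 ≤ Lam^2 * E := gamma_dist hlam hlL hmA hmB hbA hbB
  set J : ℝ := ∫ x in Ioo (0:ℝ) 1, (A x - B x)^2 with hJ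
  have hmaster : ∀ δ : ℝ, 0 < δ →
      J ≤ 2/δ^2 * E + 2*(1/lam)^2*ℓ^2/δ^2 + 2*(1/lam)^2*δ :=
    fun δ hδ => master hlam hlL hmA hmB hbA hbB hδ
  -- integrabilities
  have hIAB2 : IntegrableOn (fun x => (A x - B x)^2) (Ioo (0:ℝ) 1) := by
    refine intOn01 (by fun_prop) (c := (1/lam)^2) ?_
    filter_upwards [hbA, hbB] with x hA hB
    rw [abs_of_nonneg (sq_nonneg _)]
    nlinarith [hA.1, hA.2, hB.1, hB.2, one_div_pos.mpr hLam]
  have hIab2 : IntegrableOn (fun x => (a x - b x)^2) (Ioo (0:ℝ) 1) := by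
    refine intOn01 (by fun_prop) (c := Lam^2) ?_
    filter_upwards [haa, hab] with x hx1 hx2
    rw [abs_of_nonneg (sq_nonneg _)]
    nlinarith [hx1.1, hx1.2, hx2.1, hx2.2]
  -- I ≤ Lam^4 * J
  have hab2AB : I ≤ Lam^4 * J := by
    have hpt : ∀ᵐ x ∂(volume.restrict (Ioo (0:ℝ) 1)),
        (a x - b x)^2 ≤ Lam^4 * (A x - B x)^2 := by
      filter_upwards [haa, hab] with x hx1 hx2
      have hax : 0 < a x := lt_of_lt_of_le hlam hx1.1
      have hbx : 0 < b x := lt_of_lt_of_le hlam hx2.1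
      have hid : a x * b x * (A x - B x) = b x - a x := by
        simp only [hAdef, hBdef]
        field_simp
      have key : (a x - b x)^2 = (a x * b x)^2 * (A x - B x)^2 := by
        calc (a x - b x)^2 = (a x * b x * (A x - B x))^2 := by rw [hid]; ring
          _ = (a x * b x)^2 * (A x - B x)^2 := by ring
      have h2 : (a x * b x)^2 ≤ Lam^4 := by
        have hub : a x * b x ≤ Lam * Lam := mul_le_mul hx1.2 hx2.2 hbx.le hLam.le
        calc (a x * b x)^2 ≤ (Lam*Lam)^2 := pow_le_pow_left₀ (by positivity) hub 2
          _ = Lam^4 := by ring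
      rw [key]
      exact mul_le_mul_of_nonneg_right h2 (sq_nonneg _)
    have h := integral_mono_ae hIab2 (hIAB2.const_mul (Lam^4)) hpt
    rw [integral_const_mul] at h
    exact h
  -- key bound
  have key : I ≤ C0 * E ^ ((2:ℝ)/9) := by
    rcases eq_or_lt_of_le hE0 with hEz | hEpos
    · -- E = 0
      have hEzero : E = 0 := hEz.symm
      have hl3 : ℓ^3 = 0 := by
        refine le_antisymm ?_ (by positivity)
        rw [hEzero, mul_zero] at hγd
        exact hγd
      have hl0 : ℓ = 0 := pow_eq_zero_iff (n := 3) (by norm_num) |>.mp hl3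
      have hABz : J ≤ 0 := by
        refine le_of_forall_pos_le_add fun ε hε => ?_
        have hδpos : (0:ℝ) < min 1 (lam^2*ε/2) := by positivity
        have hm := hmaster _ hδpos
        rw [hEzero, hl0] at hm
        have h1 : min 1 (lam^2*ε/2) ≤ lam^2*ε/2 := min_le_right _ _
        have h2 : 2*(1/lam)^2*(lam^2*ε/2) = ε := by field_simp
        have h3 : 2*(1/lam)^2 * min 1 (lam^2*ε/2) ≤ 2*(1/lam)^2*(lam^2*ε/2) :=
          mul_le_mul_of_nonneg_left h1 (by positivity)
        have h4 : 2/(min 1 (lam^2*ε/2))^2 * 0 = 0 := by ring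
        have h5 : 2*(1/lam)^2*0^2/(min 1 (lam^2*ε/2))^2 = 0 := by ring
        rw [h4, h5] at hm
        rw [h2] at h3
        linarith
      rw [hEzero, Real.zero_rpow (by norm_num : ((2:ℝ)/9) ≠ 0), mul_zero]
      calc I ≤ Lam^4 * J := hab2AB
        _ ≤ Lam^4 * 0 := mul_le_mul_of_nonneg_left hABz (by positivity)
        _ = 0 := mul_zero _
    · rcases le_or_gt E 1 with hE1 | hE1
      · -- 0 < E ≤ 1, main case
        set δ : ℝ := E ^ ((2:ℝ)/9) with hδdef
        have hδpos : 0 < δ := Real.rpow_pos_of_pos hEpos _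
        have hm := hmaster _ hδpos
        have hδsq : δ^2 = E^((4:ℝ)/9) := by
          rw [hδdef, ← Real.rpow_natCast (E^((2:ℝ)/9)) 2, ← Real.rpow_mul hE0]
          norm_num
        have term1 : 2/δ^2*E ≤ 2*E^((2:ℝ)/9) := by
          have h51 : E/δ^2 = E^((5:ℝ)/9) := by
            rw [hδsq, show (5:ℝ)/9 = 1 - 4/9 by norm_num, Real.rpow_sub hEpos, Real.rpow_one]
          have h52 : E^((5:ℝ)/9) ≤ E^((2:ℝ)/9) :=
            Real.rpow_le_rpow_of_exponent_ge hEpos hE1 (by norm_num)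
          calc 2/δ^2*E = 2*(E/δ^2) := by ring
            _ = 2*E^((5:ℝ)/9) := by rw [h51]
            _ ≤ 2*E^((2:ℝ)/9) := by linarith
        have hℓ2 : ℓ^2 ≤ Lam^((4:ℝ)/3) * E^((2:ℝ)/3) := by
          have h1 : ℓ^2 = (ℓ^3)^((2:ℝ)/3) := by
            rw [← Real.rpow_natCast ℓ 3, ← Real.rpow_mul (abs_nonneg _)]
            rw [show (3:ℕ) * ((2:ℝ)/3) = ((2:ℕ):ℝ) by norm_num, Real.rpow_natCast]
          have h2 : (ℓ^3)^((2:ℝ)/3) ≤ (Lam^2*E)^((2:ℝ)/3) :=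
            Real.rpow_le_rpow (by positivity) hγd (by norm_num)
          have h3 : (Lam^2*E)^((2:ℝ)/3) = Lam^((4:ℝ)/3) * E^((2:ℝ)/3) := by
            rw [Real.mul_rpow (by positivity) hE0, ← Real.rpow_natCast Lam 2,
              ← Real.rpow_mul hLam.le]
            norm_num
          rw [h1]
          rw [h3] at h2
          exact h2
        have term2 : 2*(1/lam)^2*ℓ^2/δ^2 ≤ 2*(1/lam)^2*Lam^((4:ℝ)/3) * E^((2:ℝ)/9) := by
          have h4 : E^((2:ℝ)/3)/E^((4:ℝ)/9) = E^((2:ℝ)/9) := by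
            rw [← Real.rpow_sub hEpos]
            norm_num
          calc 2*(1/lam)^2*ℓ^2/δ^2 ≤ 2*(1/lam)^2*(Lam^((4:ℝ)/3)*E^((2:ℝ)/3))/δ^2 := by
                gcongr
            _ = 2*(1/lam)^2*Lam^((4:ℝ)/3) * (E^((2:ℝ)/3)/E^((4:ℝ)/9)) := by
                rw [hδsq]; ring
            _ = 2*(1/lam)^2*Lam^((4:ℝ)/3) * E^((2:ℝ)/9) := by rw [h4]
        have term3 : 2*(1/lam)^2*δ = 2*(1/lam)^2 * E^((2:ℝ)/9) := by rw [hδdef]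
        have hKE : J ≤ K * E^((2:ℝ)/9) := by
          rw [hK]
          calc J ≤ 2/δ^2*E + 2*(1/lam)^2*ℓ^2/δ^2 + 2*(1/lam)^2*δ := hm
            _ ≤ 2*E^((2:ℝ)/9) + 2*(1/lam)^2*Lam^((4:ℝ)/3) * E^((2:ℝ)/9)
                + 2*(1/lam)^2 * E^((2:ℝ)/9) := by
                rw [term3]; linarith
            _ = (2 + 2*(1/lam)^2*Lam^((4:ℝ)/3) + 2*(1/lam)^2) * E^((2:ℝ)/9) := by ring
        have hEr : 0 ≤ E^((2:ℝ)/9) := Real.rpow_nonneg hE0 _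
        calc I ≤ Lam^4 * J := hab2AB
          _ ≤ Lam^4 * (K * E^((2:ℝ)/9)) := mul_le_mul_of_nonneg_left hKE (by positivity)
          _ ≤ C0 * E^((2:ℝ)/9) := by rw [hC0]; nlinarith [sq_nonneg Lam]
      · -- E > 1
        have hItriv : I ≤ Lam^2 := by
          have hpt : ∀ᵐ x ∂(volume.restrict (Ioo (0:ℝ) 1)), (a x - b x)^2 ≤ Lam^2 := by
            filter_upwards [haa, hab] with x hx1 hx2
            nlinarith [hx1.1, hx1.2, hx2.1, hx2.2]
          have h := integral_mono_ae hIab2 ((integrableOn_const_iff (C := Lam^2)).mpr (Or.inr (by simp))) hpt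
          rw [integral_const] at h
          simpa using h
        have hEr1 : 1 ≤ E^((2:ℝ)/9) := by
          have h := Real.rpow_le_rpow zero_le_one hE1.le (by norm_num : (0:ℝ) ≤ 2/9)
          rwa [Real.one_rpow] at h
        have hfin : Lam^2 ≤ C0 * E^((2:ℝ)/9) := by
          rw [hC0]
          nlinarith [mul_le_mul_of_nonneg_left hEr1
            (show (0:ℝ) ≤ Lam^4*K + Lam^2 by positivity), mul_pos (pow_pos hLam 4) hKpos]
        linarith
  -- convert the interval integrals and conclude
  have hL : (∫ x in (0:ℝ)..1, (a x - b x)^2) = I := by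
    rw [hI, intervalIntegral.integral_of_le zero_le_one,
      ← Measure.restrict_congr_set MeasureTheory.Ioo_ae_eq_Ioc]
  have hR : (∫ x in (0:ℝ)..1,
      ((-(1 / a x)) * (x - gammaOf A) - (-(1 / b x)) * (x - gammaOf B)) ^ 2) = E := by
    rw [hE, intervalIntegral.integral_of_le zero_le_one,
      ← Measure.restrict_congr_set MeasureTheory.Ioo_ae_eq_Ioc]
    congr 1
    funext x
    simp only [hAdef, hBdef, ← hγ₁, ← hγ₂]
    ring
  rw [hL, hR]
  calc I ^ ((1:ℝ)/2) ≤ (C0 * E^((2:ℝ)/9)) ^ ((1:ℝ)/2) :=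
        Real.rpow_le_rpow hI0 key (by norm_num)
    _ = C0 ^ ((1:ℝ)/2) * (E^((2:ℝ)/9)) ^ ((1:ℝ)/2) :=
        Real.mul_rpow hC0pos.le (Real.rpow_nonneg hE0 _)
    _ = C0 ^ ((1:ℝ)/2) * E ^ ((1:ℝ)/9) := by
        rw [← Real.rpow_mul hE0]
        norm_num
end

section
/- For every integer d ≥ 2, the series ∑_{n ∈ (ℤ₊)^d} 1/((n₁² + n₂² + ⋯ + n_d²)·n₂·n₃⋯n_d), taken over all d-tuples n = (n₁,…,n_d) of positive integers, converges (is finite). -/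
open Finset Real

lemma summable_pi_prod {κ : Type*} : ∀ (n : ℕ) (f : Fin n → κ → ℝ),
    (∀ i x, 0 ≤ f i x) → (∀ i, Summable (f i)) →
    Summable (fun v : Fin n → κ => ∏ i, f i (v i)) := by
  intro n
  induction n with
  | zero =>
    intro f _ _
    exact Summable.of_finite
  | succ n ih =>
    intro f hnn hs
    have ihs : Summable (fun v : Fin n → κ => ∏ i, f i.succ (v i)) :=
      ih (fun i => f i.succ) (fun i x => hnn _ x) (fun i => hs _)
    have key : Summable (fun p : κ × (Fin n → κ) =>
        f 0 p.1 * ∏ i : Fin n, f i.succ (p.2 i)) := by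
      apply Summable.mul_of_nonneg (hs 0) ihs (fun x => hnn 0 x)
      exact fun v => Finset.prod_nonneg fun i _ => hnn _ _
    have heq : ((fun v : Fin (n+1) → κ => ∏ i, f i (v i)) ∘ (Fin.consEquiv (fun _ : Fin (n+1) => κ)))
        = fun p : κ × (Fin n → κ) => f 0 p.1 * ∏ i : Fin n, f i.succ (p.2 i) := by
      funext p
      simp [Fin.consEquiv, Fin.prod_univ_succ]
    rw [← (Fin.consEquiv (fun _ : Fin (n+1) => κ)).summable_iff, heq]
    exact key

/-- For every `d ≥ 2`, the series
`∑_{n ∈ (ℤ₊)^d} 1/((n₁² + ⋯ + n_d²) n₂ ⋯ n_d)` over all `d`-tuples of positive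
integers converges, where the product `n₂ ⋯ n_d` ranges over all coordinates
except the first. -/
theorem stmt12 (d : ℕ) (hd : 2 ≤ d) :
    Summable (fun n : Fin d → ℕ+ =>
      1 / ((∑ i, (((n i : ℕ)) : ℝ) ^ 2) *
        ∏ i ∈ Finset.univ.erase (⟨0, by omega⟩ : Fin d), (((n i : ℕ)) : ℝ))) := by
  set z : Fin d := ⟨0, by omega⟩ with hz
  have hd1 : (1:ℝ) ≤ (d:ℝ) - 1 := by
    have : (2:ℝ) ≤ (d:ℝ) := by exact_mod_cast hd
    linarith
  set ε : ℝ := 1 / (4 * ((d:ℝ) - 1)) with hε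
  have hε0 : 0 < ε := by positivity
  set e : Fin d → ℝ := fun i => if i = z then 3/2 else 1 + 2*ε with he
  set w : Fin d → ℝ := fun i => if i = z then 3/4 else ε with hw
  have hw0 : ∀ i, 0 ≤ w i := by
    intro i; simp only [hw]; split <;> [norm_num; linarith]
  have he1 : ∀ i, 1 < e i := by
    intro i; simp only [he]; split <;> [norm_num; linarith]
  have hcard : ((Finset.univ.erase z).card : ℝ) = (d:ℝ) - 1 := by
    rw [Finset.card_erase_of_mem (Finset.mem_univ z)]
    simp only [Finset.card_univ, Fintype.card_fin]
    have h1 : 1 ≤ d := by omega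
    push_cast [Nat.cast_sub h1]
    ring
  have hwsum : ∑ i, w i = 1 := by
    rw [← Finset.add_sum_erase _ w (Finset.mem_univ z)]
    have h1 : ∑ i ∈ Finset.univ.erase z, w i = ((Finset.univ.erase z).card : ℝ) * ε := by
      rw [Finset.sum_congr rfl (fun i hi => ?_), Finset.sum_const, nsmul_eq_mul]
      simp only [hw, if_neg (Finset.ne_of_mem_erase hi)]
    rw [h1, hcard]
    have hne : (d:ℝ) - 1 ≠ 0 := by linarith
    simp only [hw, if_pos rfl, hε]
    field_simp
    ring
  -- summability of the dominating product
  have hf : ∀ i, Summable (fun m : ℕ+ => ((m:ℕ):ℝ) ^ (-(e i))) := by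
    intro i
    have h : Summable (fun m : ℕ => (m:ℝ) ^ (-(e i))) :=
      Real.summable_nat_rpow.mpr (by linarith [he1 i])
    exact h.comp_injective PNat.coe_injective
  have hs : Summable (fun v : Fin d → ℕ+ => ∏ i, ((v i : ℕ):ℝ) ^ (-(e i))) :=
    summable_pi_prod d (fun i (m : ℕ+) => ((m:ℕ):ℝ) ^ (-(e i)))
      (fun i m => Real.rpow_nonneg (by positivity) _) hf
  refine hs.of_nonneg_of_le (fun n => by positivity) (fun n => ?_)
  set S : ℝ := ∑ i, ((n i : ℕ):ℝ) ^ 2 with hS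
  set P : ℝ := ∏ i ∈ Finset.univ.erase z, ((n i : ℕ):ℝ) with hP
  have hn1 : ∀ i, (1:ℝ) ≤ ((n i : ℕ):ℝ) := by
    intro i; exact_mod_cast (n i).one_le
  have hnpos : ∀ i, (0:ℝ) < ((n i : ℕ):ℝ) := fun i => lt_of_lt_of_le one_pos (hn1 i)
  have hSd : ∀ i, ((n i : ℕ):ℝ) ^ 2 ≤ S := by
    intro i
    exact Finset.single_le_sum (f := fun j => ((n j : ℕ):ℝ) ^ 2)
      (fun j _ => by positivity) (Finset.mem_univ i)
  have hSpos : 0 < S := by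
    have := hSd z
    nlinarith [hn1 z]
  have hPpos : 0 < P := Finset.prod_pos fun i _ => hnpos i
  -- main inequality : ∏ (n i)^(e i) ≤ S * P
  have claimA : ∏ i, ((n i : ℕ):ℝ) ^ (2 * w i) ≤ S := by
    calc ∏ i, ((n i : ℕ):ℝ) ^ (2 * w i) ≤ ∏ i, S ^ (w i) := by
          refine Finset.prod_le_prod (fun i _ => Real.rpow_nonneg (by positivity) _)
            (fun i _ => ?_)
          have : ((n i : ℕ):ℝ) ^ (2 * w i) = (((n i : ℕ):ℝ) ^ 2) ^ (w i) := by
            rw [← Real.rpow_natCast ((n i : ℕ):ℝ) 2, ← Real.rpow_mul (le_of_lt (hnpos i))]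
            norm_num
          rw [this]
          exact Real.rpow_le_rpow (by positivity) (hSd i) (hw0 i)
      _ = S ^ (∑ i, w i) := (Real.rpow_sum_of_pos hSpos w Finset.univ).symm
      _ = S := by rw [hwsum, Real.rpow_one]
  have claimB : ∏ i, ((n i : ℕ):ℝ) ^ (e i) ≤ S * P := by
    have hsplit : ∀ i, ((n i : ℕ):ℝ) ^ (e i)
        = ((n i : ℕ):ℝ) ^ (2 * w i) * (if i = z then 1 else ((n i : ℕ):ℝ)) := by
      intro i
      by_cases h : i = z
      · simp only [he, hw, if_pos h, mul_one]
        norm_num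
      · simp only [he, hw, if_neg h]
        rw [show (1:ℝ) + 2*ε = 2*ε + 1 by ring,
          Real.rpow_add_one (ne_of_gt (hnpos i))]
    calc ∏ i, ((n i : ℕ):ℝ) ^ (e i)
        = (∏ i, ((n i : ℕ):ℝ) ^ (2 * w i)) *
            ∏ i, (if i = z then 1 else ((n i : ℕ):ℝ)) := by
          rw [← Finset.prod_mul_distrib]
          exact Finset.prod_congr rfl fun i _ => hsplit i
      _ = (∏ i, ((n i : ℕ):ℝ) ^ (2 * w i)) * P := by
          congr 1
          rw [hP, ← Finset.prod_erase (a := z) (f := fun i => if i = z then (1:ℝ) else ((n i : ℕ):ℝ))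
            Finset.univ (by simp)]
          exact Finset.prod_congr rfl fun i hi => if_neg (Finset.ne_of_mem_erase hi)
      _ ≤ S * P := mul_le_mul_of_nonneg_right claimA (le_of_lt hPpos)
  have hprodpos : 0 < ∏ i, ((n i : ℕ):ℝ) ^ (e i) :=
    Finset.prod_pos fun i _ => Real.rpow_pos_of_pos (hnpos i) _
  calc 1 / (S * P) ≤ 1 / ∏ i, ((n i : ℕ):ℝ) ^ (e i) :=
        one_div_le_one_div_of_le hprodpos claimB
    _ = ∏ i, ((n i : ℕ):ℝ) ^ (-(e i)) := by
        rw [one_div, ← Finset.prod_inv_distrib]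
        exact Finset.prod_congr rfl fun i _ =>
          (Real.rpow_neg (le_of_lt (hnpos i)) _).symm
end
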